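/- arXiv:2007.13330 — 8 statements merged into one kernel-verified Lean document; each statement's English description precedes it below -/
import Mathlib

section
/- For all integers m > n ≥ 1, the greatest common divisor gcd(Φ_m, Φ_n) divides m. -/
open Real Complex

/-- `Φₙ := ∏_{1 ≤ k ≤ n, gcd(n,k) = 1} (α − e^{2πik/n} β)` for `n ≥ 2`, and `Φ₁ := 1`,
where `α = (1 + √5)/2` and `β = (1 − √5)/2`. -/
noncomputable def PhiFib (n : ℕ) : ℂ :=
  if n = 1 then 1
  else ∏ k ∈ (Finset.Icc 1 n).filter (fun k => Nat.gcd n k = 1),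
    ((((1 + Real.sqrt 5) / 2 : ℝ) : ℂ) -
      Complex.exp (2 * Real.pi * Complex.I * k / n) * (((1 - Real.sqrt 5) / 2 : ℝ) : ℂ))

open Finset Polynomial

noncomputable def alC : ℂ := (((1 + Real.sqrt 5) / 2 : ℝ) : ℂ)
noncomputable def beC : ℂ := (((1 - Real.sqrt 5) / 2 : ℝ) : ℂ)
noncomputable def zC (N k : ℕ) : ℂ := Complex.exp (2 * Real.pi * Complex.I * k / N)
noncomputable def fC (N k : ℕ) : ℂ := alC - zC N k * beC

lemma sqrt5_sq : Real.sqrt 5 ^ 2 = 5 := Real.sq_sqrt (by norm_num)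
lemma sqrt5_lt : Real.sqrt 5 < 3 := by
  nlinarith [sqrt5_sq, Real.sqrt_nonneg 5]
lemma sqrt5_gt : 2 < Real.sqrt 5 := by
  nlinarith [sqrt5_sq, Real.sqrt_nonneg 5]

lemma albe : alC * beC = -1 := by
  rw [alC, beC, ← Complex.ofReal_mul, show ((1 + Real.sqrt 5) / 2) * ((1 - Real.sqrt 5) / 2)
    = (1 - Real.sqrt 5 ^ 2)/4 by ring, sqrt5_sq]
  norm_num

lemma abs_alC : ‖alC‖ = (1 + Real.sqrt 5) / 2 := by
  rw [alC, Complex.norm_real, Real.norm_eq_abs, abs_of_pos]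
  nlinarith [sqrt5_gt]

lemma abs_beC : ‖beC‖ = (Real.sqrt 5 - 1) / 2 := by
  rw [beC, Complex.norm_real, Real.norm_eq_abs, abs_of_neg] <;> nlinarith [sqrt5_gt]

lemma abs_zC (N k : ℕ) : ‖zC N k‖ = 1 := by
  have : (2 * Real.pi * Complex.I * k / N) = ((2 * Real.pi * k / N : ℝ) : ℂ) * Complex.I := by
    push_cast
    ring
  rw [zC, this, Complex.norm_exp_ofReal_mul_I]

lemma fC_ne_zero (N k : ℕ) : fC N k ≠ 0 := by
  rw [fC, sub_ne_zero]
  intro h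
  have h2 : ‖alC‖ = ‖zC N k * beC‖ := by rw [h]
  rw [norm_mul, abs_zC, one_mul, abs_alC, abs_beC] at h2
  nlinarith [sqrt5_gt]

lemma one_lt_abs_alC : 1 < ‖alC‖ := by rw [abs_alC]; nlinarith [sqrt5_gt]
lemma abs_beC_lt_one : ‖beC‖ < 1 := by rw [abs_beC]; nlinarith [sqrt5_lt, sqrt5_gt]

lemma pow_ne (g : ℕ) (hg : 1 ≤ g) : alC ^ g - beC ^ g ≠ 0 := by
  rw [sub_ne_zero]
  intro h
  have h2 : ‖alC‖ ^ g = ‖beC‖ ^ g := by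
    rw [← norm_pow, ← norm_pow, h]
  have h3 : 1 < ‖alC‖ ^ g := one_lt_pow₀ one_lt_abs_alC (by omega)
  have h4 : ‖beC‖ ^ g < 1 :=
    pow_lt_one₀ (norm_nonneg _) abs_beC_lt_one (by omega)
  linarith

lemma alC_mem : alC ∈ integralClosure ℤ ℂ := by
  refine ⟨X ^ 2 - (X + C 1), Polynomial.monic_X_pow_sub ?_, ?_⟩
  · apply lt_of_le_of_lt (Polynomial.degree_add_le _ _)
    simp [Polynomial.degree_X, Polynomial.degree_C]
  · simp only [eval₂_sub, eval₂_pow, eval₂_X, eval₂_add, eval₂_C]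
    rw [alC]
    push_cast
    have h5 : ((Real.sqrt 5 : ℝ) : ℂ) ^ 2 = 5 := by
      rw [← Complex.ofReal_pow, sqrt5_sq]; norm_num
    linear_combination h5 / 4

lemma beC_mem : beC ∈ integralClosure ℤ ℂ := by
  refine ⟨X ^ 2 - (X + C 1), Polynomial.monic_X_pow_sub ?_, ?_⟩
  · apply lt_of_le_of_lt (Polynomial.degree_add_le _ _)
    simp [Polynomial.degree_X, Polynomial.degree_C]
  · simp only [eval₂_sub, eval₂_pow, eval₂_X, eval₂_add, eval₂_C]
    rw [beC]
    push_cast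
    have h5 : ((Real.sqrt 5 : ℝ) : ℂ) ^ 2 = 5 := by
      rw [← Complex.ofReal_pow, sqrt5_sq]; norm_num
    linear_combination h5 / 4

lemma zC_pow (N k : ℕ) (hN : N ≠ 0) : zC N k ^ N = 1 := by
  rw [zC, ← Complex.exp_nat_mul]
  have hN' : (N : ℂ) ≠ 0 := Nat.cast_ne_zero.mpr hN
  rw [show (N : ℂ) * (2 * Real.pi * Complex.I * k / N) = k * (2 * Real.pi * Complex.I) by
    field_simp]
  rw [Complex.exp_nat_mul, Complex.exp_two_pi_mul_I, one_pow]

lemma zC_mem (N k : ℕ) : zC N k ∈ integralClosure ℤ ℂ := by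
  rcases Nat.eq_zero_or_pos N with h | h
  · subst h
    have : zC 0 k = 1 := by
      rw [zC]
      norm_num [Complex.exp_zero]
    rw [this]; exact Subalgebra.one_mem _
  · refine ⟨X ^ N - C 1, Polynomial.monic_X_pow_sub_C 1 (by omega), ?_⟩
    simp only [eval₂_sub, eval₂_pow, eval₂_X, eval₂_C]
    rw [zC_pow N k (by omega)]
    simp

lemma fC_mem (N k : ℕ) : fC N k ∈ integralClosure ℤ ℂ :=
  Subalgebra.sub_mem _ alC_mem (Subalgebra.mul_mem _ (zC_mem N k) beC_mem)
lemma zC_eq_pow (N k : ℕ) : zC N k = Complex.exp (2 * Real.pi * Complex.I / N) ^ k := by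
  rw [← Complex.exp_nat_mul, zC]
  congr 1
  ring

lemma prod_Icc_zC (N : ℕ) (hN : 1 ≤ N) (x y : ℂ) :
    ∏ k ∈ Finset.Icc 1 N, (x - zC N k * y) = x ^ N - y ^ N := by
  have hNz : NeZero N := ⟨by omega⟩
  have hprim := Complex.isPrimitiveRoot_exp N (by omega)
  rw [IsPrimitiveRoot.pow_sub_pow_eq_prod_sub_mul x y (by omega) hprim]
  refine Finset.prod_bij (fun k _ => zC N k) ?_ ?_ ?_ ?_
  · intro a _
    rw [Polynomial.mem_nthRootsFinset (by omega : 0 < N)]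
    exact zC_pow N a (by omega)
  · intro a ha b hb h
    have ha' := Finset.mem_Icc.mp ha
    have hb' := Finset.mem_Icc.mp hb
    change zC N a = zC N b at h
    rw [zC_eq_pow N a, zC_eq_pow N b] at h
    have key : ∀ c : ℕ, Complex.exp (2 * Real.pi * Complex.I / N) ^ c
        = Complex.exp (2 * Real.pi * Complex.I / N) ^ (c % N) := by
      intro c
      conv_lhs => rw [← Nat.div_add_mod c N]
      rw [pow_add, pow_mul, hprim.pow_eq_one, one_pow, one_mul]
    have h : a % N = b % N := hprim.pow_inj (Nat.mod_lt _ (by omega)) (Nat.mod_lt _ (by omega))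
      (by rw [← key a, ← key b]; exact h)
    rcases eq_or_lt_of_le ha'.2 with h1 | h1 <;> rcases eq_or_lt_of_le hb'.2 with h2 | h2
    · omega
    · subst h1; rw [Nat.mod_self, Nat.mod_eq_of_lt h2] at h; omega
    · subst h2; rw [Nat.mod_self, Nat.mod_eq_of_lt h1] at h; omega
    · rw [Nat.mod_eq_of_lt h1, Nat.mod_eq_of_lt h2] at h; omega
  · intro b hb
    rw [Polynomial.mem_nthRootsFinset (by omega : 0 < N)] at hb
    obtain ⟨i, hi, hib⟩ := hprim.eq_pow_of_pow_eq_one hb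
    rcases Nat.eq_zero_or_pos i with h0 | h0
    · refine ⟨N, Finset.mem_Icc.mpr ⟨by omega, le_refl N⟩, ?_⟩
      show zC N N = b
      rw [zC_eq_pow N N, hprim.pow_eq_one, ← hib, h0, pow_zero]
    · exact ⟨i, Finset.mem_Icc.mpr ⟨by omega, by omega⟩, by show zC N i = b; rw [zC_eq_pow N i]; exact hib⟩
  · intro a _
    rfl

lemma prod_Icc_fC (N : ℕ) (hN : 1 ≤ N) :
    ∏ k ∈ Finset.Icc 1 N, fC N k = alC ^ N - beC ^ N := by
  simpa [fC] using prod_Icc_zC N hN alC beC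
/-- divisibility within the ring of algebraic integers, phrased in `ℂ`. -/
def cdvd (x z : ℂ) : Prop := ∃ c ∈ integralClosure ℤ ℂ, z = x * c

lemma cdvd_zero (x : ℂ) : cdvd x 0 := ⟨0, Subalgebra.zero_mem _, by ring⟩

lemma cdvd_trans {x y z : ℂ} (h1 : cdvd x y) (h2 : cdvd y z) : cdvd x z := by
  obtain ⟨c1, hc1, rfl⟩ := h1
  obtain ⟨c2, hc2, rfl⟩ := h2
  exact ⟨c1 * c2, Subalgebra.mul_mem _ hc1 hc2, by ring⟩

lemma cdvd_add {x a b : ℂ} (h1 : cdvd x a) (h2 : cdvd x b) : cdvd x (a + b) := by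
  obtain ⟨c1, hc1, rfl⟩ := h1
  obtain ⟨c2, hc2, rfl⟩ := h2
  exact ⟨c1 + c2, Subalgebra.add_mem _ hc1 hc2, by ring⟩

lemma cdvd_sub {x a b : ℂ} (h1 : cdvd x a) (h2 : cdvd x b) : cdvd x (a - b) := by
  obtain ⟨c1, hc1, rfl⟩ := h1
  obtain ⟨c2, hc2, rfl⟩ := h2
  exact ⟨c1 - c2, Subalgebra.sub_mem _ hc1 hc2, by ring⟩

lemma cdvd_mul_left {x z : ℂ} (c : ℂ) (hc : c ∈ integralClosure ℤ ℂ) (h : cdvd x z) :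
    cdvd x (c * z) := by
  obtain ⟨c1, hc1, rfl⟩ := h
  exact ⟨c * c1, Subalgebra.mul_mem _ hc hc1, by ring⟩

lemma cdvd_sum {ι : Type*} {x : ℂ} {s : Finset ι} {f : ι → ℂ}
    (h : ∀ i ∈ s, cdvd x (f i)) : cdvd x (∑ i ∈ s, f i) := by
  classical
  induction s using Finset.induction_on with
  | empty => simpa using cdvd_zero x
  | insert _ _ hns ih =>
    rw [Finset.sum_insert hns]
    exact cdvd_add (h _ (Finset.mem_insert_self _ _))
      (ih fun i hi => h i (Finset.mem_insert_of_mem hi))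

lemma cdvd_natCast {d a : ℕ} (h : d ∣ a) : cdvd (d : ℂ) (a : ℂ) := by
  obtain ⟨c, rfl⟩ := h
  exact ⟨(c : ℂ), Subalgebra.natCast_mem _ c, by push_cast; ring⟩

lemma cdvd_of_unit_mul {x u v z : ℂ} (hv : v ∈ integralClosure ℤ ℂ) (huv : u * v = 1)
    (h : cdvd x (u * z)) : cdvd x z := by
  obtain ⟨c, hc, hc2⟩ := h
  exact ⟨v * c, Subalgebra.mul_mem _ hv hc, by linear_combination v * hc2 - z * huv⟩

noncomputable def XX (k : ℕ) : ℂ := alC ^ k - beC ^ k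

lemma albe_unit (u : ℕ) : alC ^ u * (-beC) ^ u = 1 := by
  rw [← mul_pow, mul_neg, albe, neg_neg, one_pow]

lemma cdvd_X_add {d : ℂ} {u v : ℕ} (hu : cdvd d (XX u)) (hv : cdvd d (XX v)) :
    cdvd d (XX (u + v)) := by
  have key : XX (u + v) = alC ^ u * XX v + beC ^ v * XX u := by
    rw [XX, XX, XX, pow_add, pow_add]; ring
  rw [key]
  exact cdvd_add (cdvd_mul_left _ (Subalgebra.pow_mem _ alC_mem u) hv)
    (cdvd_mul_left _ (Subalgebra.pow_mem _ beC_mem v) hu)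

lemma cdvd_X_sub' {d : ℂ} {u v : ℕ} (huv : cdvd d (XX (u + v))) (hu : cdvd d (XX u)) :
    cdvd d (XX v) := by
  have key : alC ^ u * XX v = XX (u + v) - beC ^ v * XX u := by
    rw [XX, XX, XX, pow_add, pow_add]; ring
  refine cdvd_of_unit_mul (u := alC ^ u) (v := (-beC) ^ u)
    (Subalgebra.pow_mem _ (Subalgebra.neg_mem _ beC_mem) u) (albe_unit u) ?_
  rw [key]
  exact cdvd_sub huv (cdvd_mul_left _ (Subalgebra.pow_mem _ beC_mem v) hu)

lemma cdvd_X_mul {d : ℂ} {a : ℕ} (h : cdvd d (XX a)) (q : ℕ) : cdvd d (XX (a * q)) := by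
  induction q with
  | zero => simpa [XX] using cdvd_zero d
  | succ q ih => rw [Nat.mul_succ]; exact cdvd_X_add ih h

lemma cdvd_X_mod {d : ℂ} {a b : ℕ} (ha : cdvd d (XX a)) (hb : cdvd d (XX b)) :
    cdvd d (XX (b % a)) := by
  have h1 : cdvd d (XX (a * (b / a))) := cdvd_X_mul ha _
  have h2 : cdvd d (XX (a * (b / a) + b % a)) := by
    rw [Nat.div_add_mod]; exact hb
  exact cdvd_X_sub' h2 h1

lemma cdvd_X_gcd (d : ℂ) (a b : ℕ) (ha : cdvd d (XX a)) (hb : cdvd d (XX b)) :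
    cdvd d (XX (Nat.gcd a b)) := by
  induction a using Nat.strong_induction_on generalizing b with
  | _ a IH =>
    rcases Nat.eq_zero_or_pos a with h0 | h0
    · subst h0; rwa [Nat.gcd_zero_left]
    · rw [Nat.gcd_rec]
      exact IH (b % a) (Nat.mod_lt _ h0) a (cdvd_X_mod ha hb) ha
lemma PhiFib_eq (n : ℕ) (h : n ≠ 1) :
    PhiFib n = ∏ k ∈ (Finset.Icc 1 n).filter (fun k => Nat.gcd n k = 1), fC n k := by
  rw [PhiFib, if_neg h]
  rfl

lemma PhiFib_ne_zero (n : ℕ) (hn : 1 ≤ n) : PhiFib n ≠ 0 := by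
  by_cases h : n = 1
  · simp [PhiFib, h]
  · rw [PhiFib_eq n h]
    exact Finset.prod_ne_zero_iff.mpr fun k _ => fC_ne_zero n k

lemma cdvd_PhiFib_X (N : ℕ) (hN : 1 ≤ N) : cdvd (PhiFib N) (XX N) := by
  by_cases h : N = 1
  · subst h
    refine ⟨alC - beC, Subalgebra.sub_mem _ alC_mem beC_mem, ?_⟩
    rw [PhiFib, if_pos rfl, one_mul, XX, pow_one, pow_one]
  · rw [PhiFib_eq N h]
    refine ⟨∏ k ∈ (Finset.Icc 1 N).filter (fun k => ¬ Nat.gcd N k = 1), fC N k,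
      Subalgebra.prod_mem _ fun k _ => fC_mem N k, ?_⟩
    rw [XX, ← prod_Icc_fC N hN,
      ← Finset.prod_filter_mul_prod_filter_not (Finset.Icc 1 N) (fun k => Nat.gcd N k = 1) (fC N)]

lemma nat_dvd_of_cdvd {d t : ℕ} (hd : d ≠ 0) (h : cdvd (d : ℂ) (t : ℂ)) : d ∣ t := by
  obtain ⟨c, hc, hct⟩ := h
  have hdC : (d : ℂ) ≠ 0 := Nat.cast_ne_zero.mpr hd
  have hcq : c = ((((t : ℚ) / (d : ℚ)) : ℚ) : ℂ) := by
    have h1 : c = (t : ℂ) / (d : ℂ) := by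
      rw [eq_div_iff hdC]
      linear_combination -hct
    rw [h1]
    push_cast
    ring
  have hint : IsIntegral ℤ c := hc
  rw [hcq] at hint
  have hint2 : IsIntegral ℤ ((t : ℚ) / (d : ℚ)) := by
    rw [← isIntegral_algebraMap_iff (A := ℚ) (B := ℂ) (algebraMap ℚ ℂ).injective]
    rwa [show (algebraMap ℚ ℂ) ((t : ℚ) / (d : ℚ)) = ((((t : ℚ) / (d : ℚ)) : ℚ) : ℂ)
      from eq_ratCast _ _]
  obtain ⟨z, hz⟩ := IsIntegrallyClosed.isIntegral_iff.mp hint2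
  rw [show (algebraMap ℤ ℚ) z = ((z : ℚ)) from eq_intCast _ _] at hz
  have hq : (t : ℚ) = (d : ℚ) * z := by
    rw [eq_comm, div_eq_iff (by exact_mod_cast hd : (d:ℚ) ≠ 0)] at hz
    linear_combination hz
  have hzint : (t : ℤ) = (d : ℤ) * z := by exact_mod_cast hq
  exact Int.natCast_dvd_natCast.mp ⟨z, hzint⟩
lemma fC_scale (t g j : ℕ) (ht : t ≠ 0) (hg : g ≠ 0) : fC (t * g) (t * j) = fC g j := by
  have htC : (t : ℂ) ≠ 0 := Nat.cast_ne_zero.mpr ht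
  have hgC : (g : ℂ) ≠ 0 := Nat.cast_ne_zero.mpr hg
  rw [fC, fC, zC, zC]
  congr 2
  · congr 1
    push_cast
    field_simp

/-- Each `Φₙ` is a (positive) integer, and for all integers `m > n ≥ 1` the
greatest common divisor `gcd(Φₘ, Φₙ)` divides `m`. Here `A n` is the natural number whose value
is `Φₙ`. -/
theorem gcd_PhiFib_dvd
    (A : ℕ → ℕ) (hA : ∀ n, 1 ≤ n → (A n : ℂ) = PhiFib n)
    (m n : ℕ) (hn : 1 ≤ n) (hmn : n < m) :
    Nat.gcd (A m) (A n) ∣ m := by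
  set d := Nat.gcd (A m) (A n) with hd
  have hm1 : 1 ≤ m := by omega
  set g := Nat.gcd m n with hgdef
  have hgpos : 0 < g := Nat.gcd_pos_of_pos_left n (by omega)
  set t := m / g with htdef
  have hgm : g ∣ m := Nat.gcd_dvd_left m n
  have htm : t ∣ m := Nat.div_dvd_of_dvd hgm
  have htg : t * g = m := Nat.div_mul_cancel hgm
  have hgn : g ≤ n := Nat.le_of_dvd (by omega) (Nat.gcd_dvd_right m n)
  have ht2 : 2 ≤ t := by
    by_contra h
    push_neg at h
    interval_cases t <;> omega
  -- d ≠ 0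
  have hAn : A n ≠ 0 := by
    intro h0
    have h1 := hA n hn
    rw [h0] at h1
    exact PhiFib_ne_zero n hn (by exact_mod_cast h1.symm)
  have hd0 : d ≠ 0 := fun h => hAn (Nat.eq_zero_of_gcd_eq_zero_right h)
  -- d divides the Lucas-type numbers
  have hdm : cdvd (d : ℂ) (XX m) := by
    refine cdvd_trans (cdvd_natCast (Nat.gcd_dvd_left _ _)) ?_
    rw [hA m hm1]
    exact cdvd_PhiFib_X m hm1
  have hdn : cdvd (d : ℂ) (XX n) := by
    refine cdvd_trans (cdvd_natCast (Nat.gcd_dvd_right _ _)) ?_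
    rw [hA n hn]
    exact cdvd_PhiFib_X n hn
  have hdg : cdvd (d : ℂ) (XX g) := cdvd_X_gcd _ _ _ hdm hdn
  -- the partial product
  set PR := ∏ k ∈ (Finset.Icc 1 m).filter (fun k => ¬ (t ∣ k)), fC m k with hPRdef
  have hmult : ∏ k ∈ (Finset.Icc 1 m).filter (fun k => t ∣ k), fC m k = XX g := by
    rw [XX, ← prod_Icc_fC g (by omega)]
    refine (Finset.prod_bij (fun j _ => t * j) ?_ ?_ ?_ ?_).symm
    · intro j hj
      obtain ⟨hj1, hj2⟩ := Finset.mem_Icc.mp hj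
      refine Finset.mem_filter.mpr ⟨Finset.mem_Icc.mpr ⟨by nlinarith, ?_⟩, Dvd.intro j rfl⟩
      calc t * j ≤ t * g := Nat.mul_le_mul_left t hj2
      _ = m := htg
    · intro j1 _ j2 _ h
      exact Nat.eq_of_mul_eq_mul_left (by omega) h
    · intro b hb
      obtain ⟨hb1, hb2⟩ := Finset.mem_filter.mp hb
      obtain ⟨hb3, hb4⟩ := Finset.mem_Icc.mp hb1
      obtain ⟨j, rfl⟩ := hb2
      have hj1 : 1 ≤ j := by
        rcases Nat.eq_zero_or_pos j with h0 | h0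
        · subst h0; omega
        · omega
      have hj2 : j ≤ g := by
        have : t * j ≤ t * g := by rw [htg]; exact hb4
        exact Nat.le_of_mul_le_mul_left this (by omega)
      exact ⟨j, Finset.mem_Icc.mpr ⟨hj1, hj2⟩, rfl⟩
    · intro j _
      rw [← htg, fC_scale t g j (by omega) (by omega)]
  have hsplit : PR * XX g = XX m := by
    rw [← hmult, hPRdef, mul_comm,
      Finset.prod_filter_mul_prod_filter_not (Finset.Icc 1 m) (fun k => t ∣ k) (fC m),
      XX, ← prod_Icc_fC m hm1]
  -- d divides PR
  have hsub : (Finset.Icc 1 m).filter (fun k => Nat.gcd m k = 1)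
      ⊆ (Finset.Icc 1 m).filter (fun k => ¬ (t ∣ k)) := by
    intro k hk
    rw [Finset.mem_filter] at hk ⊢
    refine ⟨hk.1, fun htk => ?_⟩
    have h1 : t ∣ Nat.gcd m k := Nat.dvd_gcd htm htk
    rw [hk.2] at h1
    have := Nat.le_of_dvd one_pos h1
    omega
  have hm1' : m ≠ 1 := by omega
  have hdPR : cdvd (d : ℂ) PR := by
    refine cdvd_trans (cdvd_natCast (Nat.gcd_dvd_left _ _)) ?_
    rw [hA m hm1, PhiFib_eq m hm1']
    refine ⟨∏ k ∈ ((Finset.Icc 1 m).filter (fun k => ¬ (t ∣ k)))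
        \ ((Finset.Icc 1 m).filter (fun k => Nat.gcd m k = 1)), fC m k,
      Subalgebra.prod_mem _ fun k _ => fC_mem m k, ?_⟩
    rw [mul_comm, Finset.prod_sdiff hsub]
  -- PR as a geometric sum
  have hgeom : PR = ∑ i ∈ Finset.range t, alC ^ (g * i) * beC ^ (g * (t - 1 - i)) := by
    apply mul_right_cancel₀ (pow_ne g (by omega))
    have hsplit' : PR * (alC ^ g - beC ^ g) = alC ^ m - beC ^ m := hsplit
    rw [hsplit']
    simp_rw [pow_mul]
    rw [geom_sum₂_mul (alC ^ g) (beC ^ g) t, ← pow_mul, ← pow_mul, mul_comm g t, htg]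
  have hTB : (t : ℂ) * beC ^ (g * (t - 1))
      = ∑ i ∈ Finset.range t, beC ^ (g * i) * beC ^ (g * (t - 1 - i)) := by
    rw [Finset.sum_congr rfl (fun i (hi : i ∈ Finset.range t) => ?_), Finset.sum_const,
      Finset.card_range, nsmul_eq_mul]
    rw [← pow_add, ← Nat.left_distrib]
    congr 2
    have := Finset.mem_range.mp hi
    omega
  have hXgdiff : cdvd (XX g) (PR - (t : ℂ) * beC ^ (g * (t - 1))) := by
    rw [hgeom, hTB, ← Finset.sum_sub_distrib]
    refine cdvd_sum fun i _ => ?_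
    rw [← sub_mul]
    have hkey : cdvd (XX g) (alC ^ (g * i) - beC ^ (g * i)) := by
      refine ⟨∑ j ∈ Finset.range i, (alC ^ g) ^ j * (beC ^ g) ^ (i - 1 - j),
        Subalgebra.sum_mem _ fun j _ => Subalgebra.mul_mem _
          (Subalgebra.pow_mem _ (Subalgebra.pow_mem _ alC_mem g) j)
          (Subalgebra.pow_mem _ (Subalgebra.pow_mem _ beC_mem g) _), ?_⟩
      have h2 := geom_sum₂_mul (alC ^ g) (beC ^ g) i
      rw [pow_mul, pow_mul, XX, mul_comm]
      exact h2.symm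
    rw [mul_comm]
    exact cdvd_mul_left _ (Subalgebra.pow_mem _ beC_mem _) hkey
  have h7 : cdvd (d : ℂ) ((t : ℂ) * beC ^ (g * (t - 1))) := by
    have := cdvd_sub hdPR (cdvd_trans hdg hXgdiff)
    simpa using this
  have h8 : cdvd (d : ℂ) (t : ℂ) := by
    refine cdvd_of_unit_mul (u := beC ^ (g * (t - 1))) (v := (-alC) ^ (g * (t - 1)))
      (Subalgebra.pow_mem _ (Subalgebra.neg_mem _ alC_mem) _) ?_ ?_
    · rw [← mul_pow, mul_neg, mul_comm beC alC, albe, neg_neg, one_pow]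
    · rw [mul_comm]
      exact h7
  exact (nat_dvd_of_cdvd hd0 h8).trans htm
end

section
/- There exists a constant C > 0 such that |log Φ_n − φ(n) log α| ≤ C for every integer n ≥ 1, where φ is Euler's totient function. -/
open Real Complex

noncomputable def aR : ℝ := (1 + Real.sqrt 5) / 2
noncomputable def bR : ℝ := (1 - Real.sqrt 5) / 2

noncomputable def PdP (d : ℕ) : ℂ :=
  ∏ ζ ∈ primitiveRoots d ℂ, (((aR : ℝ) : ℂ) - ζ * ((bR : ℝ) : ℂ))

lemma sqrt5_bounds : (2:ℝ) ≤ Real.sqrt 5 ∧ Real.sqrt 5 ≤ 3 := by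
  have h := Real.sq_sqrt (show (0:ℝ) ≤ 5 by norm_num)
  have h2 := Real.sqrt_nonneg 5
  constructor <;> nlinarith

lemma aR_gt_one : (1:ℝ) < aR := by
  have := sqrt5_bounds.1; unfold aR; linarith

lemma aR_le_two : aR ≤ 2 := by
  have := sqrt5_bounds.2; unfold aR; linarith

lemma abs_bR_lt_aR : |bR| < aR := by
  have h1 := sqrt5_bounds.1
  have : bR ≤ 0 := by unfold bR; linarith
  rw [abs_of_nonpos this]; unfold aR bR; linarith

lemma abs_r_le_half : |bR / aR| ≤ 1 / 2 := by
  have h1 := sqrt5_bounds.1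
  have h2 := sqrt5_bounds.2
  have ha : (0:ℝ) < aR := by unfold aR; linarith
  have hb : bR ≤ 0 := by unfold bR; linarith
  rw [abs_div, abs_of_pos ha, abs_of_nonpos hb, div_le_iff₀ ha]
  unfold aR bR; linarith

lemma factor_ne_zero {d : ℕ} (hd : 0 < d) {ζ : ℂ} (hζ : ζ ∈ primitiveRoots d ℂ) :
    ((aR : ℝ) : ℂ) - ζ * ((bR : ℝ) : ℂ) ≠ 0 := by
  intro h0
  have hprim := isPrimitiveRoot_of_mem_primitiveRoots hζ
  have hz1 : ‖ζ‖ = 1 := by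
    have := Complex.norm_eq_one_of_pow_eq_one hprim.pow_eq_one hd.ne'
    simpa using this
  have heq : ((aR : ℝ) : ℂ) = ζ * ((bR : ℝ) : ℂ) := by
    have := sub_eq_zero.mp h0; exact this
  have habs := congrArg (‖·‖) heq
  rw [norm_mul, hz1, one_mul, Complex.norm_real, Complex.norm_real, Real.norm_eq_abs, Real.norm_eq_abs] at habs
  have h1 : (0:ℝ) < aR := lt_trans one_pos aR_gt_one
  rw [abs_of_pos h1] at habs
  have := abs_bR_lt_aR
  linarith

lemma PdP_ne_zero {d : ℕ} (hd : 0 < d) : PdP d ≠ 0 := by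
  unfold PdP
  rw [Finset.prod_ne_zero_iff]
  exact fun ζ hζ => factor_ne_zero hd hζ

lemma sum_log_PdP {n : ℕ} (hn : 0 < n) :
    ∑ d ∈ n.divisors, Real.log (‖PdP d‖) =
      Real.log (‖((aR : ℝ) : ℂ) ^ n - ((bR : ℝ) : ℂ) ^ n‖) := by
  have h := Complex.isPrimitiveRoot_exp n hn.ne'
  rw [h.pow_sub_pow_eq_prod_sub_mul _ _ hn,
    IsPrimitiveRoot.nthRoots_one_eq_biUnion_primitiveRoots,
    Finset.prod_biUnion (fun i _ j _ hij => IsPrimitiveRoot.disjoint hij)]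
  have habs : ‖∏ d ∈ n.divisors, PdP d‖ = ∏ d ∈ n.divisors, ‖PdP d‖ :=
    norm_prod _ _
  rw [show (∏ d ∈ n.divisors, ∏ ζ ∈ primitiveRoots d ℂ,
      (((aR : ℝ) : ℂ) - ζ * ((bR : ℝ) : ℂ))) = ∏ d ∈ n.divisors, PdP d from rfl, habs,
    Real.log_prod]
  intro d hd
  have hdpos : 0 < d := Nat.pos_of_mem_divisors hd
  simpa using (PdP_ne_zero hdpos)

set_option maxHeartbeats 800000 in
lemma PhiFib_eq_PdP {n : ℕ} (hn : 2 ≤ n) : PhiFib n = PdP n := by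
  have hn0 : n ≠ 0 := by omega
  have hn1 : n ≠ 1 := by omega
  have hnpos : 0 < n := by omega
  have h0 := Complex.isPrimitiveRoot_exp n hn0
  have hmem : ∀ k ∈ (Finset.Icc 1 n).filter (fun k => Nat.gcd n k = 1),
      Complex.exp (2 * Real.pi * Complex.I * k / n) ∈ primitiveRoots n ℂ := by
    intro k hk
    rw [Finset.mem_filter] at hk
    rw [mem_primitiveRoots hnpos]
    have : (2 * Real.pi * Complex.I * k / n) = 2 * Real.pi * Complex.I * ((k : ℂ) / n) := by ring
    rw [this]
    exact Complex.isPrimitiveRoot_exp_of_coprime k n hn0 (Nat.coprime_comm.mp hk.2)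
  have hlt : ∀ k ∈ (Finset.Icc 1 n).filter (fun k => Nat.gcd n k = 1), k < n := by
    intro k hk
    rw [Finset.mem_filter, Finset.mem_Icc] at hk
    rcases eq_or_lt_of_le hk.1.2 with rfl | h
    · exfalso; rw [Nat.gcd_self] at hk; omega
    · exact h
  have hpow : ∀ k : ℕ, Complex.exp (2 * Real.pi * Complex.I * k / n)
      = Complex.exp (2 * Real.pi * Complex.I / n) ^ k := by
    intro k
    rw [← Complex.exp_nat_mul]
    congr 1; ring
  unfold PhiFib PdP
  rw [if_neg hn1]
  refine Finset.prod_bij (fun k _ => Complex.exp (2 * Real.pi * Complex.I * k / n))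
    hmem ?_ ?_ ?_
  · intro a ha b hb hab
    rw [hpow a, hpow b] at hab
    exact h0.pow_inj (hlt a ha) (hlt b hb) hab
  · intro ξ hξ
    rw [mem_primitiveRoots hnpos] at hξ
    obtain ⟨i, hilt, hicop, hie⟩ := (Complex.isPrimitiveRoot_iff ξ n hn0).mp hξ
    have hi1 : 1 ≤ i := by
      rcases Nat.eq_zero_or_pos i with rfl | h
      · exfalso
        have := Nat.coprime_zero_left n |>.mp hicop
        omega
      · exact h
    refine ⟨i, ?_, ?_⟩
    · rw [Finset.mem_filter, Finset.mem_Icc]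
      exact ⟨⟨hi1, by omega⟩, (Nat.coprime_comm.mp hicop)⟩
    · have harg : 2 * (Real.pi:ℂ) * Complex.I * i / n
          = 2 * (Real.pi:ℂ) * Complex.I * ((i:ℂ) / n) := by ring
      simp only [harg, hie]
  · intro a ha; rfl

lemma abs_log_one_sub {t : ℝ} (ht : |t| ≤ 1/2) : |Real.log (1 - t)| ≤ 2 * |t| := by
  have h1 : (0:ℝ) < 1 - t := by
    have := abs_le.mp ht; linarith
  rw [abs_le]
  constructor
  · have hinv := Real.log_le_sub_one_of_pos (inv_pos.mpr h1)
    rw [Real.log_inv] at hinv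
    have h2 : (1 - t)⁻¹ - 1 = t / (1 - t) := by field_simp; ring
    rw [h2] at hinv
    have h3 : t / (1 - t) ≤ 2 * |t| := by
      rw [div_le_iff₀ h1]
      nlinarith [le_abs_self t, neg_abs_le t, abs_nonneg t, abs_le.mp ht]
    linarith
  · have h4 := Real.log_le_sub_one_of_pos h1
    have h5 := neg_le_abs t
    have h6 := abs_nonneg t
    linarith

lemma log_abs_pow_bound {m : ℕ} (hm : 1 ≤ m) :
    |Real.log (‖((aR : ℝ) : ℂ) ^ m - ((bR : ℝ) : ℂ) ^ m‖)
      - (m : ℝ) * Real.log aR| ≤ 2 * (1/2)^m := by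
  have ha : (0:ℝ) < aR := lt_trans one_pos aR_gt_one
  have hcast : (((aR : ℝ) : ℂ) ^ m - ((bR : ℝ) : ℂ) ^ m) = ((aR ^ m - bR ^ m : ℝ) : ℂ) := by
    push_cast; ring
  rw [hcast, Complex.norm_real, Real.norm_eq_abs, Real.log_abs]
  set t : ℝ := (bR / aR) ^ m with ht
  have hfac : aR ^ m - bR ^ m = aR ^ m * (1 - t) := by
    rw [ht, div_pow]; field_simp
  have habs_t : |t| ≤ (1/2)^m := by
    rw [ht, _root_.abs_pow]
    exact pow_le_pow_left₀ (abs_nonneg _) abs_r_le_half m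
  have hhalf : ((1:ℝ)/2)^m ≤ 1/2 := by
    calc ((1:ℝ)/2)^m ≤ (1/2)^1 := pow_le_pow_of_le_one (by norm_num) (by norm_num) hm
    _ = 1/2 := pow_one _
  have ht2 : |t| ≤ 1/2 := le_trans habs_t hhalf
  have h1t : (0:ℝ) < 1 - t := by have := abs_le.mp ht2; linarith
  rw [hfac, Real.log_mul (pow_ne_zero m ha.ne') h1t.ne', Real.log_pow]
  have := abs_log_one_sub ht2
  have h2 : |Real.log (1 - t)| ≤ 2 * (1/2)^m := by
    calc |Real.log (1-t)| ≤ 2 * |t| := this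
    _ ≤ 2 * (1/2)^m := by linarith
  calc |(m:ℝ) * Real.log aR + Real.log (1 - t) - (m:ℝ) * Real.log aR|
      = |Real.log (1 - t)| := by ring_nf
    _ ≤ 2 * (1/2)^m := h2

lemma geom_sum_Icc (n : ℕ) : ∑ m ∈ Finset.Icc 1 n, ((1:ℝ)/2)^m = 1 - (1/2)^n := by
  induction n with
  | zero => simp
  | succ k ih =>
    rw [Finset.sum_Icc_succ_top (Nat.le_add_left 1 k), ih]
    ring

open ArithmeticFunction ArithmeticFunction.Moebius in
lemma log_PdP_eq {n : ℕ} (hn : 0 < n) :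
    Real.log (‖PdP n‖) =
      ∑ x ∈ n.divisorsAntidiagonal,
        (μ x.1 : ℤ) • Real.log (‖((aR : ℝ) : ℂ) ^ x.2 - ((bR : ℝ) : ℂ) ^ x.2‖) := by
  have h := (sum_eq_iff_sum_smul_moebius_eq
    (f := fun d => Real.log (‖PdP d‖))
    (g := fun m => Real.log (‖((aR : ℝ) : ℂ) ^ m - ((bR : ℝ) : ℂ) ^ m‖))).mp
    (fun m hm => sum_log_PdP hm) n hn
  exact h.symm

open ArithmeticFunction ArithmeticFunction.Moebius in
lemma totient_eq_sum {n : ℕ} (hn : 0 < n) :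
    (Nat.totient n : ℝ) = ∑ x ∈ n.divisorsAntidiagonal, (μ x.1 : ℤ) • ((x.2 : ℝ)) := by
  have h := (sum_eq_iff_sum_smul_moebius_eq
    (f := fun d => (Nat.totient d : ℝ))
    (g := fun m => (m : ℝ))).mp
    (fun m hm => by exact_mod_cast congrArg (fun z : ℕ => (z : ℝ)) (Nat.sum_totient m)) n hn
  exact h.symm

open ArithmeticFunction ArithmeticFunction.Moebius in
lemma key_bound {n : ℕ} (hn : 0 < n) :
    |Real.log (‖PdP n‖) - (Nat.totient n : ℝ) * Real.log aR| ≤ 2 := by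
  set g : ℕ → ℝ := fun m => Real.log (‖((aR : ℝ) : ℂ) ^ m - ((bR : ℝ) : ℂ) ^ m‖)
    with hg
  have hrw : Real.log (‖PdP n‖) - (Nat.totient n : ℝ) * Real.log aR
      = ∑ x ∈ n.divisorsAntidiagonal, (μ x.1 : ℤ) • (g x.2 - (x.2 : ℝ) * Real.log aR) := by
    rw [log_PdP_eq hn, totient_eq_sum hn, Finset.sum_mul, ← Finset.sum_sub_distrib]
    refine Finset.sum_congr rfl (fun x _ => ?_)
    rw [smul_sub, smul_mul_assoc]
  rw [hrw]
  calc |∑ x ∈ n.divisorsAntidiagonal, (μ x.1 : ℤ) • (g x.2 - (x.2 : ℝ) * Real.log aR)|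
      ≤ ∑ x ∈ n.divisorsAntidiagonal, |(μ x.1 : ℤ) • (g x.2 - (x.2 : ℝ) * Real.log aR)| :=
        Finset.abs_sum_le_sum_abs _ _
    _ ≤ ∑ x ∈ n.divisorsAntidiagonal, |g x.2 - (x.2 : ℝ) * Real.log aR| := by
        refine Finset.sum_le_sum (fun x _ => ?_)
        rw [zsmul_eq_mul, abs_mul]
        have h1 : |((μ x.1 : ℤ) : ℝ)| ≤ 1 := by
          rw [← Int.cast_abs]
          exact_mod_cast abs_moebius_le_one
        nlinarith [abs_nonneg (g x.2 - (x.2 : ℝ) * Real.log aR)]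
    _ = ∑ d ∈ n.divisors, |g d - (d : ℝ) * Real.log aR| :=
        Nat.sum_divisorsAntidiagonal' (f := fun a b => |g b - (b : ℝ) * Real.log aR|)
    _ ≤ ∑ d ∈ n.divisors, 2 * (1/2)^d := by
        refine Finset.sum_le_sum (fun d hd => ?_)
        exact log_abs_pow_bound (Nat.pos_of_mem_divisors hd)
    _ ≤ ∑ d ∈ Finset.Icc 1 n, 2 * (1/2)^d := by
        refine Finset.sum_le_sum_of_subset_of_nonneg ?_ (fun d _ _ => by positivity)
        intro d hd
        rw [Finset.mem_Icc]
        exact ⟨Nat.pos_of_mem_divisors hd, Nat.le_of_dvd hn (Nat.dvd_of_mem_divisors hd)⟩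
    _ = 2 * (1 - (1/2)^n) := by rw [← Finset.mul_sum, geom_sum_Icc]
    _ ≤ 2 := by nlinarith [pow_nonneg (by norm_num : (0:ℝ) ≤ 1/2) n]


/-- There is a constant `C > 0` with `|log Φₙ − φ(n) log α| ≤ C` for every
`n ≥ 1`, where `φ` is Euler's totient function. Here `A n` is the natural number whose value
is `Φₙ`. -/
theorem log_PhiFib_eq_totient_mul_log_goldenRatio
    (A : ℕ → ℕ) (hA : ∀ n, 1 ≤ n → (A n : ℂ) = PhiFib n) :
    ∃ C : ℝ, 0 < C ∧ ∀ n : ℕ, 1 ≤ n →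
      |Real.log (A n) - (Nat.totient n : ℝ) * Real.log ((1 + Real.sqrt 5) / 2)| ≤ C := by
  have hlog : Real.log ((1 + Real.sqrt 5) / 2) = Real.log aR := rfl
  have haRpos : (0:ℝ) < aR := lt_trans one_pos aR_gt_one
  refine ⟨3, by norm_num, ?_⟩
  intro n hn
  rw [hlog]
  rcases eq_or_lt_of_le hn with h1 | h2
  · rw [← h1]
    have hA1 : (A 1 : ℂ) = 1 := by rw [hA 1 le_rfl]; simp [PhiFib]
    have : A 1 = 1 := by exact_mod_cast hA1
    rw [this]
    simp only [Nat.cast_one, Real.log_one, Nat.totient_one, zero_sub, abs_neg, one_mul]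
    rw [_root_.abs_of_nonneg (Real.log_nonneg (le_of_lt aR_gt_one))]
    have := Real.log_le_sub_one_of_pos haRpos
    have := aR_le_two
    linarith
  · have h2' : 2 ≤ n := h2
    have hnpos : 0 < n := by omega
    have hAn := hA n hn
    rw [PhiFib_eq_PdP h2'] at hAn
    have habs : (A n : ℝ) = ‖PdP n‖ := by
      rw [← hAn, Complex.norm_natCast]
    rw [habs]
    have := key_bound hnpos
    linarith
end

section
/- For every integer n ≥ 1, the number Φ_n is a positive integer, and moreover F_n = ∏_{d | n} Φ_d and L_n = ∏_{d | 2n, d ∤ n} Φ_d. -/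
open Real Complex

/-- The Lucas numbers: `L₁ = 1`, `L₂ = 3`, `L_{n+2} = L_{n+1} + L_n` (with `L₀ = 2`). -/
def lucas : ℕ → ℕ
  | 0 => 2
  | 1 => 1
  | n + 2 => lucas (n + 1) + lucas n

open Polynomial Finset

noncomputable def fibA : ℂ := (((1 + Real.sqrt 5) / 2 : ℝ) : ℂ)
noncomputable def fibB : ℂ := (((1 - Real.sqrt 5) / 2 : ℝ) : ℂ)

lemma sqrt5_gt_one : (1:ℝ) < Real.sqrt 5 := by
  have := Real.lt_sqrt (x := 1) (y := 5) (by norm_num)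
  rw [this]; norm_num

lemma fibB_ne_zero : fibB ≠ 0 := by
  simp only [fibB, ne_eq, Complex.ofReal_eq_zero]
  have h := sqrt5_gt_one
  intro hc
  rw [_root_.div_eq_zero_iff] at hc
  rcases hc with hc | hc
  · linarith
  · norm_num at hc

lemma fibA_sub_fibB : fibA - fibB = (Real.sqrt 5 : ℂ) := by
  simp only [fibA, fibB]; push_cast; ring

lemma fibA_int : IsIntegral ℤ fibA := by
  refine ⟨X ^ 2 - (X + 1), Polynomial.monic_X_pow_sub ?_, ?_⟩
  · rw [show (X + 1 : Polynomial ℤ) = X + C 1 by simp, Polynomial.degree_X_add_C]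
    decide
  have h5 : Real.sqrt 5 ^ 2 = 5 := Real.sq_sqrt (by norm_num)
  simp only [eval₂_sub, eval₂_pow, eval₂_X, eval₂_add, eval₂_one, fibA]
  rw [sub_eq_zero]
  norm_cast
  field_simp
  nlinarith [h5]

lemma fibB_int : IsIntegral ℤ fibB := by
  refine ⟨X ^ 2 - (X + 1), Polynomial.monic_X_pow_sub ?_, ?_⟩
  · rw [show (X + 1 : Polynomial ℤ) = X + C 1 by simp, Polynomial.degree_X_add_C]
    decide
  have h5 : Real.sqrt 5 ^ 2 = 5 := Real.sq_sqrt (by norm_num)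
  simp only [eval₂_sub, eval₂_pow, eval₂_X, eval₂_add, eval₂_one, fibB]
  rw [sub_eq_zero]
  norm_cast
  field_simp
  nlinarith [h5]

lemma exp_int {n : ℕ} (hn : n ≠ 0) (k : ℕ) :
    IsIntegral ℤ (Complex.exp (2 * Real.pi * Complex.I * k / n)) := by
  refine ⟨X ^ n - 1, ?_, ?_⟩
  · simpa using Polynomial.monic_X_pow_sub_C (1:ℤ) hn
  simp only [eval₂_sub, eval₂_pow, eval₂_X, eval₂_one]
  rw [sub_eq_zero, ← Complex.exp_nat_mul]
  have hn' : (n:ℂ) ≠ 0 := Nat.cast_ne_zero.mpr hn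
  have : (n:ℂ) * (2 * Real.pi * Complex.I * k / n) = (2 * Real.pi * Complex.I) * k := by
    field_simp
  rw [this, mul_comm, Complex.exp_nat_mul, Complex.exp_two_pi_mul_I, one_pow]

lemma prim_prod (d : ℕ) (hd : 2 ≤ d) (f : ℂ → ℂ) :
    ∏ k ∈ (Finset.Icc 1 d).filter (fun k => Nat.gcd d k = 1),
      f (Complex.exp (2 * Real.pi * Complex.I * k / d)) =
    ∏ μ ∈ primitiveRoots d ℂ, f μ := by
  have hd0 : d ≠ 0 := by omega
  have hdpos : 0 < d := by omega
  have hdC : (d:ℂ) ≠ 0 := Nat.cast_ne_zero.mpr hd0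
  have hζ := Complex.isPrimitiveRoot_exp d hd0
  have hlt : ∀ k ∈ (Finset.Icc 1 d).filter (fun k => Nat.gcd d k = 1), k < d := by
    intro k hk
    simp only [Finset.mem_filter, Finset.mem_Icc] at hk
    rcases eq_or_lt_of_le hk.1.2 with h | h
    · exfalso; rw [h] at hk; rw [Nat.gcd_self] at hk; omega
    · exact h
  have hexp : ∀ k : ℕ, Complex.exp (2 * Real.pi * Complex.I * k / d)
      = Complex.exp (2 * Real.pi * Complex.I / d) ^ k := by
    intro k
    rw [← Complex.exp_nat_mul]
    congr 1
    field_simp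
  refine Finset.prod_bij (fun k _ => Complex.exp (2 * Real.pi * Complex.I * k / d)) ?_ ?_ ?_ ?_
  · intro k hk
    simp only [Finset.mem_filter, Finset.mem_Icc] at hk
    rw [mem_primitiveRoots hdpos, hexp]
    exact (hζ.pow_iff_coprime hdpos k).mpr (Nat.coprime_comm.mp hk.2)
  · intro k hk k' hk' h
    rw [hexp, hexp] at h
    exact hζ.pow_inj (hlt k hk) (hlt k' hk') h
  · intro μ hμ
    rw [mem_primitiveRoots hdpos] at hμ
    obtain ⟨i, hid, hic, hie⟩ := (Complex.isPrimitiveRoot_iff μ d hd0).mp hμ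
    have hi1 : 1 ≤ i := by
      rcases Nat.eq_zero_or_pos i with h | h
      · exfalso; rw [h] at hic; rw [Nat.coprime_zero_left] at hic; omega
      · exact h
    refine ⟨i, ?_, ?_⟩
    · simp only [Finset.mem_filter, Finset.mem_Icc]
      exact ⟨⟨hi1, le_of_lt hid⟩, Nat.coprime_comm.mp hic⟩
    · rw [← hie]
      congr 1
      rw [mul_div_assoc]
  · intro k hk; rfl


lemma PhiFib_one : PhiFib 1 = 1 := if_pos rfl

lemma PhiFib_eq_of_two_le {d : ℕ} (hd : 2 ≤ d) :
    PhiFib d = ∏ μ ∈ primitiveRoots d ℂ, (fibA - μ * fibB) := by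
  rw [PhiFib, if_neg (by omega)]
  rw [← prim_prod d hd (fun μ => fibA - μ * fibB)]
  rfl

lemma cycl_eval (d : ℕ) (hd : d ≠ 0) :
    ∏ μ ∈ primitiveRoots d ℂ, (fibA - μ * fibB) =
      fibB ^ (Nat.totient d) * (Polynomial.cyclotomic d ℂ).eval (fibA / fibB) := by
  have hζ := Complex.isPrimitiveRoot_exp d hd
  rw [cyclotomic_eq_prod_X_sub_primitiveRoots hζ, Polynomial.eval_prod]
  rw [← Complex.card_primitiveRoots d, ← Finset.prod_const, ← Finset.prod_mul_distrib]
  refine Finset.prod_congr rfl ?_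
  intro μ _
  simp only [Polynomial.eval_sub, Polynomial.eval_X, Polynomial.eval_C]
  field_simp [fibB_ne_zero]

lemma keyProd {n : ℕ} (hn : n ≠ 0) :
    ∏ d ∈ n.divisors, PhiFib d = (Nat.fib n : ℂ) := by
  have hb := fibB_ne_zero
  have h1 : ∀ d ∈ n.divisors.erase 1, PhiFib d =
      fibB ^ (Nat.totient d) * (Polynomial.cyclotomic d ℂ).eval (fibA / fibB) := by
    intro d hd
    have h1' := Finset.mem_erase.mp hd
    have hd0 : d ≠ 0 := Nat.pos_of_mem_divisors (Finset.mem_of_mem_erase hd) |>.ne'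
    have hd2 : 2 ≤ d := by omega
    rw [PhiFib_eq_of_two_le hd2, cycl_eval d hd0]
  -- product over all divisors of the homogeneous cyclotomic values
  have h2 : ∏ d ∈ n.divisors, (fibB ^ (Nat.totient d) *
      (Polynomial.cyclotomic d ℂ).eval (fibA / fibB)) = fibA ^ n - fibB ^ n := by
    rw [Finset.prod_mul_distrib, Finset.prod_pow_eq_pow_sum, Nat.sum_totient,
      ← Polynomial.eval_prod, Polynomial.prod_cyclotomic_eq_X_pow_sub_one (Nat.pos_of_ne_zero hn),
      Polynomial.eval_sub, Polynomial.eval_pow, Polynomial.eval_X, Polynomial.eval_one,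
      div_pow, mul_sub, mul_one, mul_div_cancel₀ _ (pow_ne_zero n hb)]
  have hone : (1:ℕ) ∈ n.divisors := Nat.one_mem_divisors.mpr hn
  have h3 : fibB ^ (Nat.totient 1) * (Polynomial.cyclotomic 1 ℂ).eval (fibA / fibB)
      = (Real.sqrt 5 : ℂ) := by
    rw [Nat.totient_one, pow_one, Polynomial.cyclotomic_one, Polynomial.eval_sub,
      Polynomial.eval_X, Polynomial.eval_one, mul_sub, mul_one,
      mul_div_cancel₀ _ hb, fibA_sub_fibB]
  have h4 : (Real.sqrt 5 : ℂ) * ∏ d ∈ n.divisors, PhiFib d = fibA ^ n - fibB ^ n := by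
    rw [← Finset.mul_prod_erase _ _ hone, PhiFib_one, one_mul, ← h2,
      ← Finset.mul_prod_erase _ (fun d => fibB ^ (Nat.totient d) *
        (Polynomial.cyclotomic d ℂ).eval (fibA / fibB)) hone, h3]
    congr 1
    exact Finset.prod_congr rfl h1
  have h5 : fibA ^ n - fibB ^ n = (Real.sqrt 5 : ℂ) * (Nat.fib n : ℂ) := by
    have hr : (Nat.fib n : ℝ) = (goldenRatio ^ n - goldenConj ^ n) / Real.sqrt 5 :=
      Real.coe_fib_eq n
    have hs : Real.sqrt 5 ≠ 0 := by positivity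
    have hr' : goldenRatio ^ n - goldenConj ^ n = Real.sqrt 5 * (Nat.fib n : ℝ) := by
      rw [hr]; field_simp
    have : fibA ^ n - fibB ^ n = ((goldenRatio ^ n - goldenConj ^ n : ℝ) : ℂ) := by
      simp only [fibA, fibB, goldenRatio, goldenConj]
      push_cast
      ring
    rw [this, hr']
    push_cast
    ring
  have hs : (Real.sqrt 5 : ℂ) ≠ 0 := by
    simp only [ne_eq, Complex.ofReal_eq_zero]
    positivity
  have := h4.trans h5
  exact mul_left_cancel₀ hs this

lemma PhiFib_int (n : ℕ) (hn : n ≠ 0) : IsIntegral ℤ (PhiFib n) := by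
  rcases eq_or_ne n 1 with h | h
  · rw [h, PhiFib_one]; exact isIntegral_one
  rw [PhiFib, if_neg h]
  refine IsIntegral.prod _ ?_
  intro k _
  exact fibA_int.sub ((exp_int hn k).mul fibB_int)

lemma rat_int (q : ℚ) (h : IsIntegral ℤ ((q : ℚ) : ℂ)) : ∃ z : ℤ, (z : ℚ) = q := by
  letI : IsIntegrallyClosed ℤ := GCDMonoid.toIsIntegrallyClosed
  have h1 : (algebraMap ℚ ℂ) q = ((q : ℚ) : ℂ) := by
    exact_mod_cast eq_ratCast (algebraMap ℚ ℂ) q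
  rw [← h1] at h
  have h2 : IsIntegral ℤ q :=
    (isIntegral_algebraMap_iff ((algebraMap ℚ ℂ).injective)).mp h
  exact IsIntegrallyClosed.isIntegral_iff.mp h2

open Classical in
noncomputable def AFib (n : ℕ) : ℕ :=
  if h : ∃ m : ℕ, 0 < m ∧ (m : ℂ) = PhiFib n then h.choose else 1

lemma AFib_spec {n : ℕ} (h : ∃ m : ℕ, 0 < m ∧ (m : ℂ) = PhiFib n) :
    0 < AFib n ∧ (AFib n : ℂ) = PhiFib n := by
  rw [AFib, dif_pos h]
  exact h.choose_spec

lemma exists_AFib : ∀ n, 1 ≤ n → ∃ m : ℕ, 0 < m ∧ (m : ℂ) = PhiFib n := by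
  intro n
  induction n using Nat.strong_induction_on with
  | _ n ih =>
  intro hn
  have hn0 : n ≠ 0 := by omega
  have hAd : ∀ d ∈ n.divisors.erase n, 0 < AFib d ∧ (AFib d : ℂ) = PhiFib d := by
    intro d hd
    obtain ⟨hdn, hdm⟩ := Finset.mem_erase.mp hd
    have hdvd := (Nat.mem_divisors.mp hdm).1
    have hdpos : 0 < d := Nat.pos_of_mem_divisors hdm
    have hdlt : d < n := lt_of_le_of_ne (Nat.le_of_dvd (by omega) hdvd) hdn
    exact AFib_spec (ih d hdlt hdpos)
  set M := ∏ d ∈ n.divisors.erase n, AFib d with hMdef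
  have hMpos : 0 < M := Finset.prod_pos (fun d hd => (hAd d hd).1)
  have hself : n ∈ n.divisors := Nat.mem_divisors_self n hn0
  have hMcast : (M : ℂ) = ∏ d ∈ n.divisors.erase n, PhiFib d := by
    rw [hMdef]
    push_cast
    exact Finset.prod_congr rfl (fun d hd => (hAd d hd).2)
  have hMC : PhiFib n * (M : ℂ) = (Nat.fib n : ℂ) := by
    rw [hMcast, ← keyProd hn0, ← Finset.mul_prod_erase _ _ hself]
  set q : ℚ := (Nat.fib n : ℚ) / (M : ℚ) with hq
  have hfibpos : 0 < Nat.fib n := Nat.fib_pos.mpr (by omega)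
  have hq0 : 0 < q := div_pos (by exact_mod_cast hfibpos) (by exact_mod_cast hMpos)
  have hMne : (M : ℂ) ≠ 0 := by
    simp only [ne_eq, Nat.cast_eq_zero]; omega
  have hPq : PhiFib n = ((q : ℚ) : ℂ) := by
    rw [hq]
    push_cast
    rw [eq_div_iff hMne]
    exact hMC
  obtain ⟨z, hz⟩ := rat_int q (hPq ▸ PhiFib_int n hn0)
  have hzpos : 0 < z := by exact_mod_cast hz ▸ hq0
  refine ⟨z.toNat, by omega, ?_⟩
  have : ((z.toNat : ℕ) : ℂ) = ((z : ℤ) : ℂ) := by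
    exact_mod_cast congrArg (Int.cast : ℤ → ℂ) (Int.toNat_of_nonneg hzpos.le)
  rw [this, hPq, ← hz]
  push_cast
  rfl


lemma lucas_eq (n : ℕ) : lucas (n + 1) = Nat.fib n + Nat.fib (n + 2) := by
  induction n using Nat.twoStepInduction with
  | zero => simp [lucas]
  | one => simp [lucas]; rfl
  | more n ih1 ih2 =>
    have h : lucas (n + 3) = lucas (n + 2) + lucas (n + 1) := rfl
    rw [h, ih1, ih2, Nat.fib_add_two (n := n + 2), Nat.fib_add_two (n := n)]
    ring

lemma fib_mul_lucas (m : ℕ) : Nat.fib (m + 1) * lucas (m + 1) = Nat.fib (2 * (m + 1)) := by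
  have h := Nat.fib_add m (m + 1)
  have h2 : 2 * (m + 1) = m + (m + 1) + 1 := by ring
  rw [h2, h, lucas_eq]
  ring


/-- Each `Φₙ` (for `n ≥ 1`) is a positive integer, and moreover
`Fₙ = ∏_{d ∣ n} Φ_d` and `Lₙ = ∏_{d ∣ 2n, d ∤ n} Φ_d`. -/
theorem fib_lucas_eq_prod_PhiFib :
    ∃ A : ℕ → ℕ,
      (∀ n, 1 ≤ n → 0 < A n ∧ (A n : ℂ) = PhiFib n) ∧
      (∀ n, 1 ≤ n →
        Nat.fib n = ∏ d ∈ n.divisors, A d ∧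
        lucas n = ∏ d ∈ (2 * n).divisors \ n.divisors, A d) := by
  refine ⟨AFib, fun n hn => AFib_spec (exists_AFib n hn), ?_⟩
  have hfib : ∀ m : ℕ, m ≠ 0 → Nat.fib m = ∏ d ∈ m.divisors, AFib d := by
    intro m hm
    have : ((∏ d ∈ m.divisors, AFib d : ℕ) : ℂ) = (Nat.fib m : ℂ) := by
      push_cast
      rw [← keyProd hm]
      exact Finset.prod_congr rfl fun d hd =>
        (AFib_spec (exists_AFib d (Nat.pos_of_mem_divisors hd))).2
    exact_mod_cast this.symm
  intro n hn
  have hn0 : n ≠ 0 := by omega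
  refine ⟨hfib n hn0, ?_⟩
  have h2n : 2 * n ≠ 0 := by omega
  have hsub : n.divisors ⊆ (2 * n).divisors :=
    Nat.divisors_subset_of_dvd h2n ⟨2, by ring⟩
  have hsplit := Finset.prod_sdiff (f := AFib) hsub
  obtain ⟨m, rfl⟩ : ∃ m, n = m + 1 := ⟨n - 1, by omega⟩
  have hfl := fib_mul_lucas m
  have e1 := hfib (2 * (m + 1)) (by omega)
  have e2 := hfib (m + 1) (by omega)
  have hfibpos : 0 < Nat.fib (m + 1) := Nat.fib_pos.mpr (by omega)
  have key : Nat.fib (m + 1) * lucas (m + 1) =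
      Nat.fib (m + 1) * ∏ d ∈ (2 * (m + 1)).divisors \ (m + 1).divisors, AFib d := by
    rw [hfl, e1, ← hsplit, e2, mul_comm]
  exact Nat.eq_of_mul_eq_mul_left hfibpos key
end

section
/- For all integers m, n ≥ 1, the greatest common divisor gcd(F_m, L_n) equals 1, or equals 2, or equals L_{gcd(m, n)}. -/
lemma lucas_succ : ∀ n, lucas (n+1) = Nat.fib n + Nat.fib (n+2)
  | 0 => rfl
  | 1 => rfl
  | n+2 => by
    have h1 := lucas_succ n
    have h2 := lucas_succ (n+1)
    show lucas ((n+1)+2) = _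
    rw [lucas, h1, h2]
    have a := Nat.fib_add_two (n := n)
    have b := Nat.fib_add_two (n := n+1)
    have c := Nat.fib_add_two (n := n+2)
    simp only [show n+1+2=n+3 from rfl, show n+2+2=n+4 from rfl, show n+2+1=n+3 from rfl,
      show n+1+1=n+2 from rfl] at *
    omega

lemma lucas_pos (n : ℕ) : 0 < lucas n := by
  induction n using Nat.strong_induction_on with
  | _ n ih =>
    match n with
    | 0 => decide
    | 1 => decide
    | n+2 => rw [lucas]; have := ih n (by omega); omega

lemma fib_two_mul_lucas (n : ℕ) : Nat.fib (2*(n+1)) = Nat.fib (n+1) * lucas (n+1) := by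
  have h := Nat.fib_add n (n+1)
  have : 2*(n+1) = n + (n+1) + 1 := by ring
  rw [this, h, lucas_succ]
  ring

lemma lucas_dvd_fib_two_mul (n : ℕ) : lucas n ∣ Nat.fib (2*n) := by
  cases n with
  | zero => simp
  | succ k => rw [fib_two_mul_lucas]; exact Dvd.intro_left _ rfl

lemma lucas_add' : ∀ m n, lucas (m + n + 1) = lucas m * Nat.fib n + lucas (m+1) * Nat.fib (n+1)
  | m, 0 => by simp
  | m, 1 => by
    show lucas (m + 2) = _
    rw [lucas]; simp [Nat.fib_two]; omega
  | m, n+2 => by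
    have h1 := lucas_add' m n
    have h2 := lucas_add' m (n+1)
    have e : m + (n+2) + 1 = (m + (n+1) + 1) + 1 := by ring
    have e2 : m + (n+2) + 1 = (m + n + 1) + 2 := by ring
    rw [e2, lucas, show m+n+1+1 = m+(n+1)+1 from by ring, h1, h2]
    have a : Nat.fib (n+2) = Nat.fib n + Nat.fib (n+1) := Nat.fib_add_two
    have b : Nat.fib (n+3) = Nat.fib (n+1) + Nat.fib (n+2) := Nat.fib_add_two
    rw [show n+2+1 = n+3 from rfl, b, a]
    ring

lemma lucas_dvd_lucas (g k : ℕ) : lucas g ∣ lucas (g * (2*k+1)) := by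
  rcases Nat.eq_zero_or_pos (g*k) with h | h
  · have : g * (2*k+1) = g := by nlinarith [Nat.mul_eq_zero.mp h]
    rw [this]
  · set t := g*k with ht
    have e : g * (2*k+1) = g + (2*t - 1) + 1 := by
      have : g * (2*k+1) = g + 2*t := by rw [ht]; ring
      omega
    rw [e, lucas_add']
    apply dvd_add
    · exact Dvd.intro _ rfl
    · apply dvd_mul_of_dvd_right
      have e2 : 2*t - 1 + 1 = 2*t := by omega
      rw [e2]
      have : Nat.fib (2*g) ∣ Nat.fib (2*t) := Nat.fib_dvd _ _ ⟨k, by rw [ht]; ring⟩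
      exact dvd_trans (lucas_dvd_fib_two_mul g) this

lemma gcd_fib_lucas_self (n : ℕ) (hn : 1 ≤ n) : Nat.gcd (Nat.fib n) (lucas n) ∣ 2 := by
  obtain ⟨k, rfl⟩ : ∃ k, n = k + 1 := ⟨n - 1, by omega⟩
  set d := Nat.gcd (Nat.fib (k+1)) (lucas (k+1)) with hd
  have h1 : d ∣ Nat.fib (k+1) := Nat.gcd_dvd_left _ _
  have h2 : d ∣ lucas (k+1) := Nat.gcd_dvd_right _ _
  have hl : lucas (k+1) = 2 * Nat.fib k + Nat.fib (k+1) := by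
    rw [lucas_succ, Nat.fib_add_two]; ring
  have h3 : d ∣ 2 * Nat.fib k := by
    have := Nat.dvd_sub h2 h1
    rwa [hl, Nat.add_sub_cancel] at this
  have hco : Nat.Coprime d (Nat.fib k) :=
    Nat.Coprime.coprime_dvd_left h1 (Nat.fib_coprime_fib_succ k).symm
  exact hco.dvd_of_dvd_mul_right h3
lemma lucas_add_twelve : ∀ n, lucas (n + 12) % 8 = lucas n % 8
  | 0 => by decide
  | 1 => by decide
  | n+2 => by
    have h1 : lucas (n+12) % 8 = lucas n % 8 := lucas_add_twelve n
    have h2 : lucas (n+13) % 8 = lucas (n+1) % 8 := lucas_add_twelve (n+1)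
    have e1 : lucas (n+14) = lucas (n+13) + lucas (n+12) := rfl
    have e2 : lucas (n+2) = lucas (n+1) + lucas n := rfl
    show lucas (n+14) % 8 = lucas (n+2) % 8
    omega

lemma lucas_mod8 (n : ℕ) : lucas n % 8 = lucas (n % 12) % 8 := by
  induction n using Nat.strong_induction_on with
  | _ n ih =>
    rcases lt_or_ge n 12 with h | h
    · rw [Nat.mod_eq_of_lt h]
    · obtain ⟨k, rfl⟩ : ∃ k, n = k + 12 := ⟨n - 12, by omega⟩
      rw [lucas_add_twelve, ih k (by omega)]
      congr 2
      omega

lemma eight_not_dvd_lucas (n : ℕ) : ¬ (8 ∣ lucas n) := by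
  have h := lucas_mod8 n
  have h12 : n % 12 < 12 := by omega
  have key : ∀ r < 12, lucas r % 8 ≠ 0 := by decide
  have := key _ h12
  omega

lemma lucas_even_iff (n : ℕ) : 2 ∣ lucas n ↔ 3 ∣ n := by
  have h := lucas_mod8 n
  have h12 : n % 12 < 12 := by omega
  have key : ∀ r < 12, (lucas r % 8 % 2 = 0 ↔ r % 3 = 0) := by decide
  have := key _ h12
  omega

lemma lucas_four_dvd (n : ℕ) (h4 : 4 ∣ lucas n) : n % 6 = 3 := by
  have h := lucas_mod8 n
  have h12 : n % 12 < 12 := by omega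
  have key : ∀ r < 12, (lucas r % 8 % 4 = 0 → r % 6 = 3) := by decide
  have := key _ h12
  omega

lemma lucas_mod8_of_six_dvd (n : ℕ) (h : n % 6 = 0) : lucas n % 8 = 2 := by
  have h8 := lucas_mod8 n
  have h12 : n % 12 < 12 := by omega
  have key : ∀ r < 12, (r % 6 = 0 → lucas r % 8 = 2) := by decide
  have := key _ h12
  omega

lemma lucas_mod8_of_three (n : ℕ) (h : n % 6 = 3) : lucas n % 8 = 4 := by
  have h8 := lucas_mod8 n
  have h12 : n % 12 < 12 := by omega
  have key : ∀ r < 12, (r % 6 = 3 → lucas r % 8 = 4) := by decide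
  have := key _ h12
  omega

lemma fib_add_three_mod : ∀ n, Nat.fib (n + 3) % 2 = Nat.fib n % 2
  | 0 => by decide
  | 1 => by decide
  | n+2 => by
    have h1 : Nat.fib (n+3) % 2 = Nat.fib n % 2 := fib_add_three_mod n
    have h2 : Nat.fib (n+4) % 2 = Nat.fib (n+1) % 2 := fib_add_three_mod (n+1)
    have e1 : Nat.fib (n+5) = Nat.fib (n+4) + Nat.fib (n+3) := by
      rw [show n+5 = (n+3)+2 from by ring, Nat.fib_add_two]; ring_nf
    have e2 : Nat.fib (n+2) = Nat.fib (n+1) + Nat.fib n := by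
      rw [Nat.fib_add_two]; ring
    show Nat.fib (n+5) % 2 = Nat.fib (n+2) % 2
    omega

lemma fib_mod2 (n : ℕ) : Nat.fib n % 2 = Nat.fib (n % 3) % 2 := by
  induction n using Nat.strong_induction_on with
  | _ n ih =>
    rcases lt_or_ge n 3 with h | h
    · rw [Nat.mod_eq_of_lt h]
    · obtain ⟨k, rfl⟩ : ∃ k, n = k + 3 := ⟨n - 3, by omega⟩
      rw [fib_add_three_mod, ih k (by omega)]
      congr 2
      omega

lemma fib_even_iff' (n : ℕ) : 2 ∣ Nat.fib n ↔ 3 ∣ n := by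
  have h := fib_mod2 n
  have h3 : n % 3 < 3 := by omega
  have key : ∀ r < 3, (Nat.fib r % 2 = 0 ↔ r = 0) := by decide
  have := key _ h3
  omega

/-- For all `m, n ≥ 1`, `gcd(F_m, L_n)` equals `1`, `2`, or `L_{gcd(m,n)}`. -/
theorem gcd_fib_lucas (m n : ℕ) (hm : 1 ≤ m) (hn : 1 ≤ n) :
    Nat.gcd (Nat.fib m) (lucas n) = 1 ∨
    Nat.gcd (Nat.fib m) (lucas n) = 2 ∨
    Nat.gcd (Nat.fib m) (lucas n) = lucas (Nat.gcd m n) := by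
  set g := Nat.gcd m n with hg
  have hg0 : 0 < g := Nat.gcd_pos_of_pos_left _ hm
  have hgm : g ∣ m := Nat.gcd_dvd_left m n
  have hgn : g ∣ n := Nat.gcd_dvd_right m n
  set d := Nat.gcd (Nat.fib m) (lucas n) with hd
  have hdf : d ∣ Nat.fib m := Nat.gcd_dvd_left _ _
  have hdl : d ∣ lucas n := Nat.gcd_dvd_right _ _
  have hd2 : d ∣ Nat.fib (Nat.gcd m (2*n)) := by
    rw [Nat.fib_gcd]
    exact Nat.dvd_gcd hdf (hdl.trans (lucas_dvd_fib_two_mul n))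
  have hGg : g ∣ Nat.gcd m (2*n) := Nat.dvd_gcd hgm (hgn.mul_left 2)
  have hG2g : Nat.gcd m (2*n) ∣ 2 * g := by
    rw [hg, ← Nat.gcd_mul_left]
    exact Nat.dvd_gcd ((Nat.gcd_dvd_left m (2*n)).trans (dvd_mul_left m 2)) (Nat.gcd_dvd_right _ _)
  obtain ⟨q, hq⟩ := hgm
  have hgm : g ∣ m := ⟨q, hq⟩
  rcases Nat.even_or_odd q with hqe | hqo
  · -- m/g even case
    obtain ⟨t, ht⟩ := hqe
    have h2gm : 2*g ∣ m := ⟨t, by rw [hq, ht]; ring⟩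
    have hmg : m / g = q := by rw [hq, Nat.mul_div_cancel_left _ hg0]
    have hco : Nat.Coprime (m / g) (n / g) := Nat.coprime_div_gcd_div_gcd hg0
    have hnodd : Odd (n / g) := by
      rcases Nat.even_or_odd (n / g) with he | ho
      · exfalso
        have h2 : 2 ∣ Nat.gcd (m/g) (n/g) := by
          refine Nat.dvd_gcd ?_ ?_
          · rw [hmg]; exact ⟨t, ht.trans (by ring)⟩
          · obtain ⟨s, hs⟩ := he; exact ⟨s, hs.trans (by ring)⟩
        rw [Nat.Coprime] at hco
        rw [hco] at h2
        exact absurd h2 (by norm_num)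
      · exact ho
    obtain ⟨k, hk⟩ := hnodd
    have hng : n = g * (2*k+1) := by
      have h := Nat.div_mul_cancel hgn
      rw [hk] at h
      calc n = (2*k+1) * g := h.symm
        _ = g * (2*k+1) := by ring
    have hLf : lucas g ∣ Nat.fib m :=
      (lucas_dvd_fib_two_mul g).trans (Nat.fib_dvd _ _ h2gm)
    have hLl : lucas g ∣ lucas n := hng ▸ lucas_dvd_lucas g k
    have hLd : lucas g ∣ d := Nat.dvd_gcd hLf hLl
    have h2gG : 2*g ∣ Nat.gcd m (2*n) := Nat.dvd_gcd h2gm (mul_dvd_mul_left 2 hgn)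
    have hGeq : Nat.gcd m (2*n) = 2*g := Nat.dvd_antisymm hG2g h2gG
    have hd2g : d ∣ Nat.fib g * lucas g := by
      rw [hGeq] at hd2
      rwa [show 2*g = 2*(g-1+1) from by omega, fib_two_mul_lucas,
        show g-1+1 = g from by omega] at hd2
    have hfgln : Nat.gcd (Nat.fib g) (lucas n) ∣ 2 := by
      have h1 : Nat.gcd (Nat.fib g) (lucas n) ∣ Nat.gcd (Nat.fib n) (lucas n) :=
        Nat.dvd_gcd ((Nat.gcd_dvd_left _ _).trans (Nat.fib_dvd _ _ hgn)) (Nat.gcd_dvd_right _ _)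
      exact h1.trans (gcd_fib_lucas_self n hn)
    have hd2L : d ∣ 2 * lucas g := by
      have h1 : d ∣ Nat.gcd (Nat.fib g * lucas g) (lucas n * lucas g) :=
        Nat.dvd_gcd hd2g (Dvd.dvd.mul_right hdl (lucas g))
      rw [Nat.gcd_mul_right] at h1
      exact h1.trans (mul_dvd_mul_right hfgln (lucas g))
    obtain ⟨a, haa⟩ := hLd
    have ha2 : a ∣ 2 := by
      have h1 : lucas g * a ∣ lucas g * 2 := by
        rw [← haa]; rwa [mul_comm 2 (lucas g)] at hd2L
      exact (Nat.mul_dvd_mul_iff_left (lucas_pos g)).mp h1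
    rcases Nat.prime_two.eq_one_or_self_of_dvd a ha2 with h1 | h2
    · right; right; rw [haa, h1, mul_one]
    · exfalso
      rw [h2] at haa
      have h2Ln : 2 * lucas g ∣ lucas n := by
        rw [mul_comm]; exact haa ▸ hdl
      have hev_m : 2 ∣ Nat.fib m := dvd_trans ⟨lucas g, by rw [haa]; ring⟩ hdf
      have hev_n : 2 ∣ lucas n := dvd_trans ⟨lucas g, by rw [haa]; ring⟩ hdl
      have h3m : 3 ∣ m := (fib_even_iff' m).mp hev_m
      have h3n : 3 ∣ n := (lucas_even_iff n).mp hev_n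
      have h3g : 3 ∣ g := Nat.dvd_gcd h3m h3n
      have hg6 : g % 6 = 0 ∨ g % 6 = 3 := by omega
      rcases hg6 with h6 | h6
      · have hl8 := lucas_mod8_of_six_dvd g h6
        have h4 : 4 ∣ lucas n := dvd_trans (show (4:ℕ) ∣ 2 * lucas g by omega) h2Ln
        have hn6 := lucas_four_dvd n h4
        have h6n : 6 ∣ n := dvd_trans (show (6:ℕ) ∣ g by omega) hgn
        omega
      · have hl8 := lucas_mod8_of_three g h6
        have h8 : 8 ∣ lucas n := dvd_trans (show (8:ℕ) ∣ 2 * lucas g by omega) h2Ln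
        exact eight_not_dvd_lucas n h8
  · -- m/g odd case
    have hGeq : Nat.gcd m (2*n) = g := by
      obtain ⟨a, ha⟩ := hGg
      have ha2 : a ∣ 2 := by
        have h1 : g * a ∣ g * 2 := by rw [← ha]; rwa [mul_comm 2 g] at hG2g
        exact (Nat.mul_dvd_mul_iff_left hg0).mp h1
      rcases Nat.prime_two.eq_one_or_self_of_dvd a ha2 with h1 | h2
      · rw [ha, h1, mul_one]
      · exfalso
        have hdm : g * a ∣ m := ha ▸ Nat.gcd_dvd_left m (2*n)
        rw [h2, hq] at hdm
        have h2q : 2 ∣ q := (Nat.mul_dvd_mul_iff_left hg0).mp hdm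
        rw [Nat.odd_iff] at hqo
        omega
    have hdg : d ∣ Nat.fib g := hGeq ▸ hd2
    have hdgg : d ∣ Nat.gcd (Nat.fib n) (lucas n) :=
      Nat.dvd_gcd (hdg.trans (Nat.fib_dvd _ _ hgn)) hdl
    have hd2' : d ∣ 2 := hdgg.trans (gcd_fib_lucas_self n hn)
    rcases Nat.prime_two.eq_one_or_self_of_dvd d hd2' with h1 | h2
    · left; exact h1
    · right; left; exact h2
end

section
/- Let r, m be positive integers, let S be the set of s ∈ {1, ..., m} such that there exists an integer t ≥ 1 with s·t ≡ r (mod m), and for each s ∈ S let t(s) be the minimal such t. Then for all real x ≥ 1, ⋃_{n ∈ A_{r,m}(x)} D(n) = ⋃_{s ∈ S} A_{s,m}(x / t(s)). -/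
/-- `A_{r,m}(x) := {n ≥ 1 : n ≤ x and n ≡ r (mod m)}`. -/
def Aset (r m : ℕ) (x : ℝ) : Set ℕ :=
  {n | 0 < n ∧ (n : ℝ) ≤ x ∧ n ≡ r [MOD m]}

/-- Let `S` be the set of `s ∈ {1, …, m}` such that `s·t ≡ r (mod m)` for some
`t ≥ 1`, and for `s ∈ S` let `t s` be the minimal such `t`. Then
`⋃_{n ∈ A_{r,m}(x)} D(n) = ⋃_{s ∈ S} A_{s,m}(x / t(s))` for all `x ≥ 1`. -/
theorem union_divisors_Aset
    (r m : ℕ) (hr : 0 < r) (hm : 0 < m)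
    (S : Set ℕ) (hS : S = {s | 1 ≤ s ∧ s ≤ m ∧ ∃ t, 1 ≤ t ∧ s * t ≡ r [MOD m]})
    (t : ℕ → ℕ)
    (ht : ∀ s ∈ S, 1 ≤ t s ∧ s * t s ≡ r [MOD m] ∧
      ∀ t', 1 ≤ t' → s * t' ≡ r [MOD m] → t s ≤ t')
    (x : ℝ) (hx : 1 ≤ x) :
    (⋃ n ∈ Aset r m x, {d : ℕ | d ∣ n}) = ⋃ s ∈ S, Aset s m (x / t s) := by
  subst hS
  ext d
  simp only [Set.mem_iUnion, Set.mem_setOf_eq, Aset]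
  constructor
  · rintro ⟨n, ⟨hn, hnx, hnr⟩, hdn⟩
    have hd : 0 < d := Nat.pos_of_dvd_of_pos hdn hn
    obtain ⟨t', hdt'⟩ := hdn
    have ht' : 0 < t' := by
      rcases Nat.eq_zero_or_pos t' with h | h
      · simp [h, hdt'] at hn
      · exact h
    set s := if d % m = 0 then m else d % m with hs
    have hs1 : 1 ≤ s := by
      rcases eq_or_ne (d % m) 0 with h | h
      · simp [hs, h]; exact hm
      · simp [hs, h]; omega
    have hsm : s ≤ m := by
      rcases eq_or_ne (d % m) 0 with h | h
      · simp [hs, h]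
      · simp [hs, h]; exact le_of_lt (Nat.mod_lt _ hm)
    have hsd : s ≡ d [MOD m] := by
      rcases eq_or_ne (d % m) 0 with h | h
      · simp only [hs, if_pos h]
        unfold Nat.ModEq
        simp [h]
      · simp only [hs, if_neg h]
        exact Nat.mod_modEq d m
    have hstr : s * t' ≡ r [MOD m] := by
      calc s * t' ≡ d * t' [MOD m] := hsd.mul_right t'
        _ = n := hdt'.symm
        _ ≡ r [MOD m] := hnr
    have hsS : 1 ≤ s ∧ s ≤ m ∧ ∃ u, 1 ≤ u ∧ s * u ≡ r [MOD m] :=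
      ⟨hs1, hsm, t', ht', hstr⟩
    obtain ⟨hts1, htsr, htmin⟩ := ht s hsS
    have hle : t s ≤ t' := htmin t' ht' hstr
    refine ⟨s, hsS, hd, ?_, hsd.symm⟩
    rw [le_div_iff₀ (by exact_mod_cast hts1)]
    calc (d : ℝ) * t s ≤ (d : ℝ) * t' := by
          exact_mod_cast Nat.mul_le_mul_left d hle
      _ = (n : ℝ) := by exact_mod_cast hdt'.symm
      _ ≤ x := hnx
  · rintro ⟨s, hsS, hd, hdx, hds⟩
    obtain ⟨hts1, htsr, -⟩ := ht s hsS
    refine ⟨d * t s, ⟨by positivity, ?_, ?_⟩, Dvd.intro _ rfl⟩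
    · push_cast
      rw [le_div_iff₀ (by exact_mod_cast hts1)] at hdx
      exact hdx
    · calc d * t s ≡ s * t s [MOD m] := hds.mul_right _
        _ ≡ r [MOD m] := htsr
end

section
/- Let r, m be positive integers, let S be the set of s ∈ {1, ..., m} such that there exists an odd integer t ≥ 1 with s·t ≡ r (mod m), and for each s ∈ S let t(s) be the minimal such odd t. Then for all real x ≥ 1, ⋃_{n ∈ A_{r,m}(x)} D′(n) = ⋃_{s ∈ S} A_{2s,2m}(2x / t(s)). -/
/-- Let `S` be the set of `s ∈ {1, …, m}` such that `s·t ≡ r (mod m)` for some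
odd `t ≥ 1`, and for `s ∈ S` let `t s` be the minimal such odd `t`. Then
`⋃_{n ∈ A_{r,m}(x)} D′(n) = ⋃_{s ∈ S} A_{2s,2m}(2x / t(s))` for all `x ≥ 1`, where
`D′(n) = {d : d ∣ 2n, d ∤ n}`. -/
theorem union_divisors'_Aset
    (r m : ℕ) (hr : 0 < r) (hm : 0 < m)
    (S : Set ℕ) (hS : S = {s | 1 ≤ s ∧ s ≤ m ∧ ∃ t, 1 ≤ t ∧ Odd t ∧ s * t ≡ r [MOD m]})
    (t : ℕ → ℕ)
    (ht : ∀ s ∈ S, 1 ≤ t s ∧ Odd (t s) ∧ s * t s ≡ r [MOD m] ∧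
      ∀ t', 1 ≤ t' → Odd t' → s * t' ≡ r [MOD m] → t s ≤ t')
    (x : ℝ) (hx : 1 ≤ x) :
    (⋃ n ∈ Aset r m x, {d : ℕ | d ∣ 2 * n ∧ ¬ d ∣ n}) =
      ⋃ s ∈ S, Aset (2 * s) (2 * m) (2 * x / t s) := by
  ext d
  simp only [Set.mem_iUnion, Set.mem_setOf_eq, Aset, exists_prop]
  constructor
  · rintro ⟨n, ⟨hn0, hnx, hnr⟩, hd2n, hdn⟩
    -- d is even
    have hde : 2 ∣ d := by
      by_contra h
      have hcop : Nat.Coprime d 2 :=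
        ((Nat.Prime.coprime_iff_not_dvd Nat.prime_two).mpr h).symm
      exact hdn (hcop.dvd_of_dvd_mul_left hd2n)
    obtain ⟨k, rfl⟩ := hde
    have hk : k ∣ n := (mul_dvd_mul_iff_left (two_ne_zero)).mp hd2n
    obtain ⟨t0, rfl⟩ := hk
    have hk0 : 0 < k := by
      rcases Nat.eq_zero_or_pos k with rfl | h
      · simp at hn0
      · exact h
    have ht0odd : Odd t0 := by
      rcases Nat.even_or_odd t0 with ⟨c, rfl⟩ | ho
      · exact absurd ⟨c, by ring⟩ hdn
      · exact ho
    have ht01 : 1 ≤ t0 := ht0odd.pos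
    -- choose s in {1,...,m} with s ≡ k mod m
    set s : ℕ := if k % m = 0 then m else k % m with hsdef
    have hsk : s ≡ k [MOD m] := by
      show s % m = k % m
      unfold s
      split_ifs with h
      · rw [Nat.mod_self]; omega
      · exact Nat.mod_mod_of_dvd k dvd_rfl
    have hs1 : 1 ≤ s := by
      unfold s; split_ifs with h <;> omega
    have hsm : s ≤ m := by
      have := Nat.mod_lt k hm
      unfold s; split_ifs with h <;> omega
    have hstr : s * t0 ≡ r [MOD m] := (hsk.mul_right t0).trans hnr
    have hsS : s ∈ S := by rw [hS]; exact ⟨hs1, hsm, t0, ht01, ht0odd, hstr⟩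
    obtain ⟨ht1, htodd, htmod, hmin⟩ := ht s hsS
    have htle : t s ≤ t0 := hmin t0 ht01 ht0odd hstr
    refine ⟨s, hsS, by omega, ?_, ?_⟩
    · rw [le_div_iff₀ (by exact_mod_cast ht1 : (0:ℝ) < (t s : ℝ))]
      have h1 : (k : ℝ) * t s ≤ (k : ℝ) * t0 := by
        have : (t s : ℝ) ≤ t0 := by exact_mod_cast htle
        nlinarith
      push_cast at hnx ⊢
      nlinarith
    · exact Nat.ModEq.mul_left' 2 hsk.symm
  · rintro ⟨s, hsS, hd0, hdx, hdmod⟩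
    obtain ⟨ht1, htodd, htmod, -⟩ := ht s hsS
    have hts0 : 0 < t s := ht1
    -- d is even
    have hde : 2 ∣ d := by
      have h2 : d ≡ 2 * s [MOD 2] := Nat.ModEq.of_dvd ⟨m, rfl⟩ hdmod
      have : d % 2 = 0 := by
        have := h2
        simpa [Nat.ModEq, Nat.mul_mod_right] using this
      omega
    obtain ⟨k, rfl⟩ := hde
    have hk0 : 0 < k := by omega
    -- k ≡ s [MOD m]
    have hks : k ≡ s [MOD m] := by
      have h := (Nat.modEq_iff_dvd).mp hdmod
      push_cast at h
      rw [Nat.modEq_iff_dvd]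
      have : (m : ℤ) ∣ (s : ℤ) - k := by
        rcases h with ⟨c, hc⟩
        refine ⟨c, ?_⟩
        have : (2 : ℤ) * ((s : ℤ) - k) = 2 * (m * c) := by linarith
        linarith [mul_left_cancel₀ (by norm_num : (2:ℤ) ≠ 0) this]
      exact this
    refine ⟨k * t s, ⟨Nat.mul_pos hk0 hts0, ?_, ?_⟩, ⟨t s, by ring⟩, ?_⟩
    · -- (k * t s : ℝ) ≤ x
      have h := (le_div_iff₀ (by exact_mod_cast hts0 : (0:ℝ) < (t s : ℝ))).mp hdx
      push_cast at h ⊢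
      nlinarith
    · exact (hks.mul_right (t s)).trans htmod
    · rintro ⟨c, hc⟩
      have : t s = 2 * c := by
        have h : k * t s = k * (2 * c) := by linarith [hc]
        exact Nat.eq_of_mul_eq_mul_left hk0 h
      have h2 := Nat.odd_iff.mp htodd
      omega
end

section
/- For every sequence s = (s_n)_{n ≥ 1} in {-1, +1} and every integer n ≥ 5, the contribution of small primes to ℓ_s(n) is negligible: log ∏_{p ≤ n, p^v ∥ ℓ_s(n)} p^v = O(n² / log n), where the product ranges over primes p ≤ n and p^v ∥ ℓ_s(n) means p^v exactly divides ℓ_s(n); the implied constant is absolute. -/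
open Real

/-- `ℓ_s(n) := lcm(F₅ + s₅, …, Fₙ + sₙ)`. -/
def shiftedLcm (s : ℕ → ℤ) (n : ℕ) : ℤ :=
  (Finset.Icc 5 n).lcm (fun k => (Nat.fib k : ℤ) + s k)

lemma fib_le_two_pow_aux (n : ℕ) : Nat.fib n ≤ 2 ^ n := by
  induction n using Nat.twoStepInduction with
  | zero => simp
  | one => simp
  | more n ih1 ih2 =>
    rw [Nat.fib_add_two]
    calc Nat.fib n + Nat.fib (n+1) ≤ 2 ^ n + 2 ^ (n+1) := Nat.add_le_add ih1 ih2
    _ ≤ 2 ^ (n+1) + 2 ^ (n+1) := by gcongr <;> simp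
    _ = 2 ^ (n+2) := by ring

lemma natAbs_finset_lcm_aux (t : Finset ℕ) (f : ℕ → ℤ) :
    (t.lcm f).natAbs = t.lcm (fun k => (f k).natAbs) := by
  induction t using Finset.induction with
  | empty => simp
  | insert a s ha ih =>
    rw [Finset.lcm_insert, Finset.lcm_insert, ← ih, lcm_eq_nat_lcm, ← Int.lcm_def,
      Int.natAbs_lcm]

lemma pow_dvd_lcm_or_aux {p v a b : ℕ} (hp : p.Prime) (h : p ^ v ∣ Nat.lcm a b) :
    p ^ v ∣ a ∨ p ^ v ∣ b := by
  rcases eq_or_ne a 0 with rfl | ha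
  · left; simp
  rcases eq_or_ne b 0 with rfl | hb
  · right; simp
  have hl : Nat.lcm a b ≠ 0 := Nat.lcm_ne_zero ha hb
  rw [Nat.Prime.pow_dvd_iff_le_factorization hp hl, Nat.factorization_lcm ha hb] at h
  rcases le_max_iff.mp (by simpa using h) with h | h
  · exact Or.inl ((Nat.Prime.pow_dvd_iff_le_factorization hp ha).mpr h)
  · exact Or.inr ((Nat.Prime.pow_dvd_iff_le_factorization hp hb).mpr h)

lemma pow_dvd_of_dvd_lcm_aux {p v : ℕ} (hp : p.Prime) (hv : 0 < v) {t : Finset ℕ} {f : ℕ → ℕ}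
    (h : p ^ v ∣ t.lcm f) : ∃ k ∈ t, p ^ v ∣ f k := by
  induction t using Finset.induction with
  | empty =>
    simp only [Finset.lcm_empty, Nat.dvd_one, Nat.pow_eq_one, hv.ne', or_false] at h
    exact absurd h hp.one_lt.ne'
  | insert a s ha ih =>
    rw [Finset.lcm_insert, lcm_eq_nat_lcm] at h
    rcases pow_dvd_lcm_or_aux hp h with h | h
    · exact ⟨_, Finset.mem_insert_self _ _, h⟩
    · obtain ⟨k, hk, hd⟩ := ih h
      exact ⟨k, Finset.mem_insert_of_mem hk, hd⟩

lemma chebyshev_aux (n : ℕ) (hn : 2 ≤ n) :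
    ((((Finset.range (n+1)).filter Nat.Prime).card : ℕ) : ℝ) * Real.log n ≤ 7 * n := by
  set m := Nat.sqrt n with hm
  set T := (Finset.range (n+1)).filter Nat.Prime with hT
  set T₁ := T.filter (fun p => p ≤ m) with hT1
  set T₂ := T.filter (fun p => ¬ p ≤ m) with hT2
  have hcard : T₁.card + T₂.card = T.card := Finset.card_filter_add_card_filter_not _
  have hn0 : (0:ℝ) < n := by positivity
  have hsqrt_pos : (0:ℝ) < Real.sqrt n := Real.sqrt_pos.mpr hn0
  have h1sqrt : (1:ℝ) ≤ Real.sqrt n := by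
    rw [show (1:ℝ) = Real.sqrt 1 by simp]
    exact Real.sqrt_le_sqrt (by exact_mod_cast Nat.one_le_iff_ne_zero.mpr (by omega))
  have hmsqrt : (m:ℝ) ≤ Real.sqrt n := by
    rw [show (m:ℝ) = Real.sqrt ((m:ℝ)^2) by rw [Real.sqrt_sq (by positivity)]]
    apply Real.sqrt_le_sqrt
    exact_mod_cast Nat.sqrt_le' n
  have hsqrtm1 : Real.sqrt n ≤ (m:ℝ) + 1 := by
    rw [show ((m:ℝ)+1) = Real.sqrt (((m:ℝ)+1)^2) by rw [Real.sqrt_sq (by positivity)]]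
    apply Real.sqrt_le_sqrt
    have := Nat.lt_succ_sqrt' n
    exact_mod_cast this.le
  have hlog_nonneg : 0 ≤ Real.log n := Real.log_nonneg (by exact_mod_cast hn.trans' one_le_two)
  have hlog_le : Real.log n ≤ 2 * Real.sqrt n := by
    have h := Real.log_le_sub_one_of_pos hsqrt_pos
    have h2 : Real.log n = 2 * Real.log (Real.sqrt n) := by
      rw [Real.log_sqrt hn0.le]; ring
    nlinarith
  have hc1 : (T₁.card : ℝ) ≤ (m:ℝ) + 1 := by
    have hsub : T₁ ⊆ Finset.range (m+1) := by
      intro p hp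
      simp only [hT1, Finset.mem_filter] at hp
      exact Finset.mem_range.mpr (by omega)
    have := Finset.card_le_card hsub
    rw [Finset.card_range] at this
    exact_mod_cast this
  have hbig : (m+1) ^ T₂.card ≤ 4 ^ n := by
    calc (m+1) ^ T₂.card ≤ ∏ p ∈ T₂, p := by
          apply Finset.pow_card_le_prod
          intro p hp
          simp only [hT2, Finset.mem_filter] at hp
          omega
    _ ≤ ∏ p ∈ T, p := by
          apply Finset.prod_le_prod_of_subset_of_one_le' (Finset.filter_subset _ _)
          intro p hp _
          simp only [hT, Finset.mem_filter] at hp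
          exact hp.2.one_lt.le
    _ = primorial n := rfl
    _ ≤ 4 ^ n := primorial_le_4_pow n
  have hbigR : (T₂.card : ℝ) * Real.log ((m:ℝ)+1) ≤ (n:ℝ) * Real.log 4 := by
    have h := Real.log_le_log (by positivity)
      (show (((m+1) ^ T₂.card : ℕ) : ℝ) ≤ ((4 ^ n : ℕ) : ℝ) by exact_mod_cast hbig)
    rw [Nat.cast_pow, Nat.cast_pow, Real.log_pow, Real.log_pow] at h
    push_cast at h ⊢
    linarith
  have hlog_sqrt_le : (1/2) * Real.log n ≤ Real.log ((m:ℝ)+1) := by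
    rw [show (1/2) * Real.log n = Real.log (Real.sqrt n) by rw [Real.log_sqrt hn0.le]; ring]
    exact Real.log_le_log hsqrt_pos hsqrtm1
  have hc2 : (T₂.card : ℝ) * Real.log n ≤ 3 * n := by
    have hlog4 : Real.log 4 ≤ (3:ℝ)/2 := by
      rw [show (4:ℝ) = 2^2 by norm_num, Real.log_pow]
      have := Real.log_two_lt_d9
      push_cast
      nlinarith
    have hT2nn : (0:ℝ) ≤ (T₂.card : ℝ) := by positivity
    nlinarith [mul_le_mul_of_nonneg_left hlog_sqrt_le hT2nn]
  have hc1' : (T₁.card : ℝ) * Real.log n ≤ 4 * n := by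
    have h2s : (m:ℝ) + 1 ≤ 2 * Real.sqrt n := by linarith
    have hmul : (T₁.card : ℝ) * Real.log n ≤ (2 * Real.sqrt n) * (2 * Real.sqrt n) :=
      mul_le_mul (hc1.trans h2s) hlog_le hlog_nonneg (by positivity)
    have hs : Real.sqrt n * Real.sqrt n = n := Real.mul_self_sqrt hn0.le
    nlinarith
  have hsplit : (T.card : ℝ) = (T₁.card : ℝ) + (T₂.card : ℝ) := by exact_mod_cast hcard.symm
  rw [hsplit]
  nlinarith

/-- The contribution of the primes `p ≤ n` to `ℓ_s(n)` is negligible: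
`log ∏_{p ≤ n, p^v ∥ ℓ_s(n)} p^v = O(n² / log n)`, with an absolute implied constant; here
`v = v_p(ℓ_s(n))` is the exact exponent of `p` in `ℓ_s(n)`. -/
theorem log_small_prime_part_shiftedLcm :
    ∃ C : ℝ, 0 < C ∧ ∀ s : ℕ → ℤ, (∀ k, s k = 1 ∨ s k = -1) → ∀ n : ℕ, 5 ≤ n →
      |Real.log ((∏ p ∈ (Finset.range (n + 1)).filter Nat.Prime,
          p ^ ((shiftedLcm s n).natAbs.factorization p) : ℕ) : ℝ)| ≤
        C * (n : ℝ) ^ 2 / Real.log n := by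
  refine ⟨14, by norm_num, ?_⟩
  intro s hs n hn
  set N := (shiftedLcm s n).natAbs with hNdef
  have hNe : N = (Finset.Icc 5 n).lcm (fun k => ((Nat.fib k : ℤ) + s k).natAbs) :=
    natAbs_finset_lcm_aux _ _
  have hfib5 : ∀ k, k ∈ Finset.Icc 5 n → 5 ≤ Nat.fib k := by
    intro k hk
    have h := Nat.fib_mono (Finset.mem_Icc.mp hk).1
    exact le_trans (by decide) h
  have hterm : ∀ k ∈ Finset.Icc 5 n, ((Nat.fib k : ℤ) + s k).natAbs ≠ 0 := by
    intro k hk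
    have h5 : (5:ℤ) ≤ (Nat.fib k : ℤ) := by exact_mod_cast hfib5 k hk
    rcases hs k with h | h <;> rw [h] <;> omega
  have key : ∀ p ∈ (Finset.range (n+1)).filter Nat.Prime,
      p ^ (N.factorization p) ≤ 2 ^ (n+1) := by
    intro p hp
    have hpp : p.Prime := (Finset.mem_filter.mp hp).2
    set v := N.factorization p with hv
    rcases Nat.eq_zero_or_pos v with h0 | h0
    · rw [h0]; simpa using Nat.one_le_two_pow
    have hdvd : p ^ v ∣ N := Nat.ordProj_dvd N p
    rw [hNe] at hdvd
    obtain ⟨k, hk, hd⟩ := pow_dvd_of_dvd_lcm_aux hpp h0 hdvd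
    have hk0 : ((Nat.fib k : ℤ) + s k).natAbs ≠ 0 := hterm k hk
    have hle : p ^ v ≤ ((Nat.fib k : ℤ) + s k).natAbs :=
      Nat.le_of_dvd (Nat.pos_of_ne_zero hk0) hd
    have habs : ((Nat.fib k : ℤ) + s k).natAbs ≤ Nat.fib k + 1 := by
      rcases hs k with h | h <;> rw [h] <;> omega
    have hkn : k ≤ n := (Finset.mem_Icc.mp hk).2
    calc p ^ v ≤ Nat.fib k + 1 := hle.trans habs
      _ ≤ 2 ^ k + 1 := by have := fib_le_two_pow_aux k; omega
      _ ≤ 2 ^ n + 2 ^ n := by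
          have h1 : 2^k ≤ 2^n := Nat.pow_le_pow_right (by norm_num) hkn
          have h2 : (1:ℕ) ≤ 2^n := Nat.one_le_two_pow
          omega
      _ = 2 ^ (n+1) := by ring
  set T := (Finset.range (n+1)).filter Nat.Prime with hT
  set P : ℕ := ∏ p ∈ T, p ^ (N.factorization p) with hP
  have hPle : P ≤ (2 ^ (n+1)) ^ T.card := Finset.prod_le_pow_card _ _ _ key
  have hP1 : 1 ≤ P := Finset.one_le_prod' (fun p hp =>
    Nat.one_le_iff_ne_zero.mpr (pow_ne_zero _ ((Finset.mem_filter.mp hp).2.pos.ne')))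
  have hlogP : Real.log P ≤ (T.card : ℝ) * (((n:ℝ)+1) * Real.log 2) := by
    have h := Real.log_le_log (by exact_mod_cast hP1.trans_lt' zero_lt_one)
      (show (P:ℝ) ≤ (((2 ^ (n+1)) ^ T.card : ℕ):ℝ) by exact_mod_cast hPle)
    rw [Nat.cast_pow, Nat.cast_pow, Real.log_pow, Real.log_pow] at h
    push_cast at h
    linarith
  have hcheb : (T.card:ℝ) * Real.log n ≤ 7 * n := chebyshev_aux n (by omega)
  have hn1 : (1:ℝ) < n := by exact_mod_cast (by omega : 1 < n)
  have hlogn : 0 < Real.log n := Real.log_pos hn1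
  rw [abs_of_nonneg (Real.log_nonneg (by exact_mod_cast hP1))]
  rw [le_div_iff₀ hlogn]
  have hlog2 : Real.log 2 ≤ 1 := by
    have := Real.log_two_lt_d9; linarith
  have hlog2nn : (0:ℝ) ≤ Real.log 2 := Real.log_nonneg one_le_two
  have hTnn : (0:ℝ) ≤ (T.card:ℝ) := by positivity
  have hn1' : ((n:ℝ)+1) ≤ 2 * n := by
    have : (1:ℝ) ≤ n := by exact_mod_cast (by omega : 1 ≤ n)
    linarith
  calc Real.log P * Real.log n
      ≤ ((T.card:ℝ) * (((n:ℝ)+1) * Real.log 2)) * Real.log n :=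
        mul_le_mul_of_nonneg_right hlogP hlogn.le
    _ ≤ ((T.card:ℝ) * (((n:ℝ)+1) * 1)) * Real.log n := by
        have hnp : (0:ℝ) ≤ (n:ℝ)+1 := by positivity
        have : ((n:ℝ)+1) * Real.log 2 ≤ ((n:ℝ)+1) * 1 :=
          mul_le_mul_of_nonneg_left hlog2 hnp
        exact mul_le_mul_of_nonneg_right (mul_le_mul_of_nonneg_left this hTnn) hlogn.le
    _ = ((n:ℝ)+1) * ((T.card:ℝ) * Real.log n) := by ring
    _ ≤ (2*(n:ℝ)) * (7*(n:ℝ)) :=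
        mul_le_mul hn1' hcheb (mul_nonneg hTnn hlogn.le) (by positivity)
    _ = 14 * (n:ℝ)^2 := by ring
end

section
/- Let (s_n)_{n ≥ 1} be a sequence of independent random variables, each uniformly distributed on {-1, +1}. Then for every integer n ≥ 5 and every integer d ≥ 6, the probability that d does not belong to M_s(n) equals 16^{−⌊n·gcd(2,d)/(2d)⌋}. -/
open MeasureTheory ProbabilityTheory

/-- `F_s(n)`: the set of integers `h ∈ [2, n/2]` such that `s_{2h−2} = (−1)^h`, or
`s_{2h−1} = (−1)^{h+1}`, or `s_{2h+1} = (−1)^{h+1}`, or `s_{2h+2} = (−1)^{h+1}`. -/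
def Fset (s : ℕ → ℤ) (n : ℕ) : Finset ℕ :=
  (Finset.Icc 2 n).filter (fun h => 2 * h ≤ n ∧
    (s (2 * h - 2) = (-1) ^ h ∨ s (2 * h - 1) = (-1) ^ (h + 1) ∨
      s (2 * h + 1) = (-1) ^ (h + 1) ∨ s (2 * h + 2) = (-1) ^ (h + 1)))

/-- `L_s(n)`: the set of integers `h ∈ [2, n/2]` such that `s_{2h−2} = (−1)^{h+1}`, or
`s_{2h−1} = (−1)^h`, or `s_{2h+1} = (−1)^h`, or `s_{2h+2} = (−1)^h`. -/
def Lset (s : ℕ → ℤ) (n : ℕ) : Finset ℕ :=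
  (Finset.Icc 2 n).filter (fun h => 2 * h ≤ n ∧
    (s (2 * h - 2) = (-1) ^ (h + 1) ∨ s (2 * h - 1) = (-1) ^ h ∨
      s (2 * h + 1) = (-1) ^ h ∨ s (2 * h + 2) = (-1) ^ h))

/-- `M_s(n) := (⋃_{h ∈ F_s(n)} D(h)) ∪ (⋃_{h ∈ L_s(n)} D′(h))`, where `D(h)` is the set of
divisors of `h` and `D′(h) = D(2h) \ D(h)`. -/
def Mset (s : ℕ → ℤ) (n : ℕ) : Finset ℕ :=
  (Fset s n).biUnion (fun h => h.divisors) ∪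
    (Lset s n).biUnion (fun h => (2 * h).divisors \ h.divisors)

namespace ProbNotMemAux

/-- The set of "constrained" indices `h`. -/
def Tset (n d : ℕ) : Finset ℕ :=
  (Finset.Icc 2 n).filter (fun h => 2 * h ≤ n ∧ d ∣ 2 * h)

/-- The four coordinates pinned by a constrained index `h`. -/
def coords (h : ℕ) : Finset ℕ := {2 * h - 2, 2 * h - 1, 2 * h + 1, 2 * h + 2}

/-- The pinned value at coordinate `i`. -/
def vfun (d i : ℕ) : ℤ :=
  (if i + 2 = d * ((i + 2) / d) then (-1 : ℤ) else 1) *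
    (if d ∣ d * ((i + 2) / d) / 2 then (-1 : ℤ) ^ (d * ((i + 2) / d) / 2)
     else (-1 : ℤ) ^ (d * ((i + 2) / d) / 2 + 1))

lemma neg_one_pow_pm (k : ℕ) : ((-1 : ℤ)) ^ k = 1 ∨ ((-1 : ℤ)) ^ k = -1 := by
  rcases Nat.even_or_odd k with h | h
  · exact Or.inl h.neg_one_pow
  · exact Or.inr h.neg_one_pow

lemma neg_one_pow_succ (k : ℕ) : ((-1 : ℤ)) ^ (k + 1) = -((-1 : ℤ)) ^ k := by
  rw [pow_succ]; ring

lemma neg_one_pow_ne_succ (k : ℕ) : ((-1 : ℤ)) ^ k ≠ ((-1 : ℤ)) ^ (k + 1) := by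
  rw [neg_one_pow_succ]
  rcases neg_one_pow_pm k with h | h <;> rw [h] <;> norm_num

lemma neg_one_pow_add_two (k : ℕ) : ((-1 : ℤ)) ^ (k + 2) = ((-1 : ℤ)) ^ k := by
  rw [pow_add]; norm_num

lemma sign_ne_iff {a : ℤ} (ha : a = 1 ∨ a = -1) (k : ℕ) :
    a ≠ (-1) ^ k ↔ a = (-1) ^ (k + 1) := by
  rw [neg_one_pow_succ]
  rcases neg_one_pow_pm k with h | h <;> rw [h] <;> rcases ha with rfl | rfl <;> norm_num

lemma vfun_pm (d i : ℕ) : vfun d i = 1 ∨ vfun d i = -1 := by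
  unfold vfun
  rcases neg_one_pow_pm (d * ((i + 2) / d) / 2) with h | h <;>
    rcases neg_one_pow_pm (d * ((i + 2) / d) / 2 + 1) with h' | h' <;>
    split <;> split <;> simp [h, h']

lemma block_eq {d h i : ℕ} (hd : 6 ≤ d) (hdvd : d ∣ 2 * h)
    (hlo : 2 * h ≤ i + 2) (hhi : i + 2 ≤ 2 * h + 4) :
    d * ((i + 2) / d) = 2 * h := by
  obtain ⟨q, hq⟩ := hdvd
  have h1 : q * d = 2 * h := by rw [mul_comm, ← hq]
  have hdiv : (i + 2) / d = q := by
    apply Nat.div_eq_of_lt_le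
    · omega
    · have h2 : (q + 1) * d = 2 * h + d := by rw [add_mul, one_mul, h1]
      omega
  rw [hdiv, ← hq]

lemma vfun_spec {d h : ℕ} (hd : 6 ≤ d) (h2 : 2 ≤ h) (hdvd : d ∣ 2 * h) :
    vfun d (2 * h - 2) = (if d ∣ h then (-1 : ℤ) ^ (h + 1) else (-1) ^ h) ∧
    vfun d (2 * h - 1) = (if d ∣ h then (-1 : ℤ) ^ h else (-1) ^ (h + 1)) ∧
    vfun d (2 * h + 1) = (if d ∣ h then (-1 : ℤ) ^ h else (-1) ^ (h + 1)) ∧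
    vfun d (2 * h + 2) = (if d ∣ h then (-1 : ℤ) ^ h else (-1) ^ (h + 1)) := by
  have hb1 : d * ((2 * h - 2 + 2) / d) = 2 * h := block_eq hd hdvd (by omega) (by omega)
  have hb2 : d * ((2 * h - 1 + 2) / d) = 2 * h := block_eq hd hdvd (by omega) (by omega)
  have hb3 : d * ((2 * h + 1 + 2) / d) = 2 * h := block_eq hd hdvd (by omega) (by omega)
  have hb4 : d * ((2 * h + 2 + 2) / d) = 2 * h := block_eq hd hdvd (by omega) (by omega)
  have hh : 2 * h / 2 = h := by omega
  refine ⟨?_, ?_, ?_, ?_⟩ <;> unfold vfun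
  · rw [hb1, hh, if_pos (by omega)]
    split <;> rw [neg_one_pow_succ] <;> ring
  · rw [hb2, hh, if_neg (by omega)]
    split <;> ring
  · rw [hb3, hh, if_neg (by omega)]
    split <;> ring
  · rw [hb4, hh, if_neg (by omega)]
    split <;> ring

lemma mem_coords_bounds {h i : ℕ} (hi : i ∈ coords h) :
    2 * h ≤ i + 2 ∧ i + 2 ≤ 2 * h + 4 := by
  simp only [coords, Finset.mem_insert, Finset.mem_singleton] at hi
  omega

/-- The key combinatorial equivalence. -/
lemma not_mem_Mset_iff (t : ℕ → ℤ) (ht : ∀ k, t k = 1 ∨ t k = -1) {n d : ℕ} (hd : 6 ≤ d) :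
    d ∉ Mset t n ↔ ∀ h ∈ Tset n d, ∀ i ∈ coords h, t i = vfun d i := by
  constructor
  · intro hM h hh i hi
    simp only [Tset, Finset.mem_filter, Finset.mem_Icc] at hh
    obtain ⟨⟨h2, hn'⟩, hle, hdvd⟩ := hh
    have spec := vfun_spec hd h2 hdvd
    by_cases hdh : d ∣ h
    · -- F-type constraint
      have hF : h ∉ Fset t n := by
        intro hF
        exact hM (Finset.mem_union_left _ (Finset.mem_biUnion.2
          ⟨h, hF, Nat.mem_divisors.2 ⟨hdh, by omega⟩⟩))
      simp only [Fset, Finset.mem_filter, Finset.mem_Icc] at hF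
      push_neg at hF
      obtain ⟨c1, c2, c3, c4⟩ := hF ⟨h2, hn'⟩ hle
      obtain ⟨s1, s2, s3, s4⟩ := spec
      have p1 := (sign_ne_iff (ht _) h).1 c1
      have p2 := (sign_ne_iff (ht _) (h + 1)).1 c2
      have p3 := (sign_ne_iff (ht _) (h + 1)).1 c3
      have p4 := (sign_ne_iff (ht _) (h + 1)).1 c4
      rw [neg_one_pow_add_two] at p2 p3 p4
      simp only [coords, Finset.mem_insert, Finset.mem_singleton] at hi
      rcases hi with rfl | rfl | rfl | rfl
      · rw [s1, if_pos hdh, p1]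
      · rw [s2, if_pos hdh, p2]
      · rw [s3, if_pos hdh, p3]
      · rw [s4, if_pos hdh, p4]
    · -- L-type constraint
      have hL : h ∉ Lset t n := by
        intro hL
        refine hM (Finset.mem_union_right _ (Finset.mem_biUnion.2
          ⟨h, hL, Finset.mem_sdiff.2 ⟨Nat.mem_divisors.2 ⟨hdvd, by omega⟩, ?_⟩⟩))
        intro hc
        exact hdh (Nat.mem_divisors.1 hc).1
      simp only [Lset, Finset.mem_filter, Finset.mem_Icc] at hL
      push_neg at hL
      obtain ⟨c1, c2, c3, c4⟩ := hL ⟨h2, hn'⟩ hle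
      obtain ⟨s1, s2, s3, s4⟩ := spec
      have p1 := (sign_ne_iff (ht _) (h + 1)).1 c1
      have p2 := (sign_ne_iff (ht _) h).1 c2
      have p3 := (sign_ne_iff (ht _) h).1 c3
      have p4 := (sign_ne_iff (ht _) h).1 c4
      rw [neg_one_pow_add_two] at p1
      simp only [coords, Finset.mem_insert, Finset.mem_singleton] at hi
      rcases hi with rfl | rfl | rfl | rfl
      · rw [s1, if_neg hdh, p1]
      · rw [s2, if_neg hdh, p2]
      · rw [s3, if_neg hdh, p3]
      · rw [s4, if_neg hdh, p4]
  · intro hpin hM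
    simp only [Mset, Finset.mem_union, Finset.mem_biUnion, Finset.mem_sdiff] at hM
    rcases hM with ⟨h, hF, hdiv⟩ | ⟨h, hL, hdiv⟩
    · simp only [Fset, Finset.mem_filter, Finset.mem_Icc] at hF
      obtain ⟨⟨h2, hn'⟩, hle, hor⟩ := hF
      have hdh : d ∣ h := (Nat.mem_divisors.1 hdiv).1
      have hdvd2 : d ∣ 2 * h := hdh.mul_left 2
      have hT : h ∈ Tset n d := by
        simp only [Tset, Finset.mem_filter, Finset.mem_Icc]
        exact ⟨⟨h2, hn'⟩, hle, hdvd2⟩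
      have spec := vfun_spec hd h2 hdvd2
      obtain ⟨s1, s2, s3, s4⟩ := spec
      have q1 := hpin h hT (2 * h - 2) (by simp [coords])
      have q2 := hpin h hT (2 * h - 1) (by simp [coords])
      have q3 := hpin h hT (2 * h + 1) (by simp [coords])
      have q4 := hpin h hT (2 * h + 2) (by simp [coords])
      rw [s1, if_pos hdh] at q1; rw [s2, if_pos hdh] at q2
      rw [s3, if_pos hdh] at q3; rw [s4, if_pos hdh] at q4
      rcases hor with e | e | e | e
      · exact neg_one_pow_ne_succ h (e.symm.trans q1)
      · exact neg_one_pow_ne_succ h (q2.symm.trans e)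
      · exact neg_one_pow_ne_succ h (q3.symm.trans e)
      · exact neg_one_pow_ne_succ h (q4.symm.trans e)
    · simp only [Lset, Finset.mem_filter, Finset.mem_Icc] at hL
      obtain ⟨⟨h2, hn'⟩, hle, hor⟩ := hL
      have hdvd2 : d ∣ 2 * h := (Nat.mem_divisors.1 hdiv.1).1
      have hdh : ¬ d ∣ h := by
        intro hc
        exact hdiv.2 (Nat.mem_divisors.2 ⟨hc, by omega⟩)
      have hT : h ∈ Tset n d := by
        simp only [Tset, Finset.mem_filter, Finset.mem_Icc]
        exact ⟨⟨h2, hn'⟩, hle, hdvd2⟩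
      have spec := vfun_spec hd h2 hdvd2
      obtain ⟨s1, s2, s3, s4⟩ := spec
      have q1 := hpin h hT (2 * h - 2) (by simp [coords])
      have q2 := hpin h hT (2 * h - 1) (by simp [coords])
      have q3 := hpin h hT (2 * h + 1) (by simp [coords])
      have q4 := hpin h hT (2 * h + 2) (by simp [coords])
      rw [s1, if_neg hdh] at q1; rw [s2, if_neg hdh] at q2
      rw [s3, if_neg hdh] at q3; rw [s4, if_neg hdh] at q4
      rcases hor with e | e | e | e
      · exact neg_one_pow_ne_succ h (q1.symm.trans e)
      · exact neg_one_pow_ne_succ h (e.symm.trans q2)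
      · exact neg_one_pow_ne_succ h (e.symm.trans q3)
      · exact neg_one_pow_ne_succ h (e.symm.trans q4)

lemma gcd_two_cases (d : ℕ) : Nat.gcd 2 d = 1 ∨ Nat.gcd 2 d = 2 :=
  (Nat.Prime.eq_one_or_self_of_dvd Nat.prime_two _ (Nat.gcd_dvd_left 2 d))

lemma dvd_two_mul_iff {d : ℕ} (hd : 6 ≤ d) (h : ℕ) :
    d ∣ 2 * h ↔ (d / Nat.gcd 2 d) ∣ h := by
  set e := d / Nat.gcd 2 d with he
  have hg : Nat.gcd 2 d ∣ d := Nat.gcd_dvd_right 2 d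
  have hgd : Nat.gcd 2 d * e = d := Nat.mul_div_cancel' hg
  rcases gcd_two_cases d with h1 | h2
  · have hde : e = d := by rw [he, h1, Nat.div_one]
    rw [hde]
    constructor
    · intro hh
      exact (Nat.Coprime.symm h1).dvd_of_dvd_mul_left hh
    · exact fun hh => hh.mul_left 2
  · have hde : d = 2 * e := by rw [← hgd, h2]
    constructor
    · intro hh
      rw [hde] at hh
      exact (Nat.mul_dvd_mul_iff_left (by norm_num : 0 < 2)).1 hh
    · intro hh
      rw [hde]
      exact Nat.mul_dvd_mul_left 2 hh

lemma dquot_ge {d : ℕ} (hd : 6 ≤ d) : 3 ≤ d / Nat.gcd 2 d := by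
  rcases gcd_two_cases d with h1 | h2
  · rw [h1, Nat.div_one]; omega
  · rw [h2]; omega

lemma Tset_card {n d : ℕ} (hd : 6 ≤ d) :
    (Tset n d).card = n * Nat.gcd 2 d / (2 * d) := by
  have hg : Nat.gcd 2 d ∣ d := Nat.gcd_dvd_right 2 d
  have hgd : Nat.gcd 2 d * (d / Nat.gcd 2 d) = d := Nat.mul_div_cancel' hg
  have hd' := dquot_ge hd
  have hset : Tset n d = (Finset.Ioc 0 (n / 2)).filter (fun h => (d / Nat.gcd 2 d) ∣ h) := by
    ext h
    simp only [Tset, Finset.mem_filter, Finset.mem_Icc, Finset.mem_Ioc, dvd_two_mul_iff hd]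
    constructor
    · rintro ⟨⟨h2, hn'⟩, hle, hdvd⟩
      exact ⟨⟨by omega, by omega⟩, hdvd⟩
    · rintro ⟨⟨h0, hle⟩, hdvd⟩
      have hle' := Nat.le_of_dvd h0 hdvd
      exact ⟨⟨by omega, by omega⟩, by omega, hdvd⟩
  rw [hset, Nat.Ioc_filter_dvd_card_eq_div, Nat.div_div_eq_div_mul]
  have h2d : 2 * d = 2 * (d / Nat.gcd 2 d) * Nat.gcd 2 d := by
    rw [mul_assoc, mul_comm (d / Nat.gcd 2 d), hgd]
  rw [h2d, Nat.mul_div_mul_right _ _ (Nat.gcd_pos_of_pos_left d (by norm_num))]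

lemma mem_Tset_two_le {n d h : ℕ} (hh : h ∈ Tset n d) : 2 ≤ h := by
  simp only [Tset, Finset.mem_filter, Finset.mem_Icc] at hh
  exact hh.1.1

lemma coords_card {h : ℕ} (h2 : 2 ≤ h) : (coords h).card = 4 := by
  unfold coords
  rw [Finset.card_insert_of_notMem
      (by simp only [Finset.mem_insert, Finset.mem_singleton]; omega),
    Finset.card_insert_of_notMem
      (by simp only [Finset.mem_insert, Finset.mem_singleton]; omega),
    Finset.card_insert_of_notMem (by simp only [Finset.mem_singleton]; omega),
    Finset.card_singleton]

lemma coords_disjoint {n d : ℕ} (hd : 6 ≤ d) :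
    ∀ h ∈ Tset n d, ∀ h' ∈ Tset n d, h ≠ h' → Disjoint (coords h) (coords h') := by
  have key : ∀ h ∈ Tset n d, ∀ h' ∈ Tset n d, h < h' → Disjoint (coords h) (coords h') := by
    intro h hh h' hh' hlt
    have d1 : (d / Nat.gcd 2 d) ∣ h := by
      simp only [Tset, Finset.mem_filter] at hh
      exact (dvd_two_mul_iff hd h).1 hh.2.2
    have d2 : (d / Nat.gcd 2 d) ∣ h' := by
      simp only [Tset, Finset.mem_filter] at hh'
      exact (dvd_two_mul_iff hd h').1 hh'.2.2
    have dsub : (d / Nat.gcd 2 d) ∣ h' - h := Nat.dvd_sub d2 d1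
    have hge : d / Nat.gcd 2 d ≤ h' - h := Nat.le_of_dvd (by omega) dsub
    have hd' := dquot_ge hd
    rw [Finset.disjoint_left]
    intro i hi hi'
    have b1 := mem_coords_bounds hi
    have b2 := mem_coords_bounds hi'
    omega
  intro h hh h' hh' hne
  rcases lt_or_gt_of_ne hne with hlt | hlt
  · exact key h hh h' hh' hlt
  · exact (key h' hh' h hh hlt).symm

end ProbNotMemAux

/-- If `(sₙ)` are independent random signs, uniformly distributed on
`{-1, +1}`, then for `n ≥ 5` and `d ≥ 6` the probability that `d ∉ M_s(n)` equals
`16^{−⌊n·gcd(2,d)/(2d)⌋}`. -/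
theorem prob_not_mem_Mset
    {Ω : Type*} [MeasurableSpace Ω] (P : Measure Ω) [IsProbabilityMeasure P]
    (s : ℕ → Ω → ℤ) (hmeas : ∀ n, Measurable (s n))
    (hval : ∀ n ω, s n ω = 1 ∨ s n ω = -1)
    (hunif : ∀ n, P {ω | s n ω = 1} = 1 / 2 ∧ P {ω | s n ω = -1} = 1 / 2)
    (hindep : iIndepFun s P)
    (n d : ℕ) (hn : 5 ≤ n) (hd : 6 ≤ d) :
    P {ω | d ∉ Mset (fun k => s k ω) n} =
      ((16 : ENNReal) ^ (n * Nat.gcd 2 d / (2 * d)))⁻¹ := by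
  classical
  open ProbNotMemAux in
  set I : Finset ℕ := (Tset n d).biUnion coords with hI
  have hevent : {ω | d ∉ Mset (fun k => s k ω) n} = ⋂ i ∈ I, s i ⁻¹' {vfun d i} := by
    ext ω
    simp only [Set.mem_setOf_eq, Set.mem_iInter, Set.mem_preimage, Set.mem_singleton_iff]
    rw [not_mem_Mset_iff (fun k => s k ω) (fun k => hval k ω) hd]
    constructor
    · intro H i hi
      obtain ⟨h, hh, hih⟩ := Finset.mem_biUnion.1 hi
      exact H h hh i hih
    · intro H h hh i hih
      exact H i (Finset.mem_biUnion.2 ⟨h, hh, hih⟩)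
  rw [hevent,
    hindep.measure_inter_preimage_eq_mul I (fun i _ => measurableSet_singleton (vfun d i))]
  have hv : ∀ i : ℕ, P (s i ⁻¹' {vfun d i}) = 1 / 2 := by
    intro i
    have hpre : ∀ c : ℤ, s i ⁻¹' {c} = {ω | s i ω = c} := fun c => rfl
    rcases vfun_pm d i with h | h <;> rw [h, hpre]
    · exact (hunif i).1
    · exact (hunif i).2
  rw [Finset.prod_congr rfl (fun i _ => hv i), Finset.prod_const]
  have hcard : I.card = 4 * (Tset n d).card := by
    rw [hI, Finset.card_biUnion (coords_disjoint hd),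
      Finset.sum_congr rfl (fun h hh => coords_card (mem_Tset_two_le hh)),
      Finset.sum_const, smul_eq_mul, mul_comm]
  rw [hcard, Tset_card hd, one_div, pow_mul, ENNReal.inv_pow, ← ENNReal.inv_pow]
  norm_num
end
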